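/- With the fibrations and equivalences as defined, the category EFF is a path category: it satisfies all seven axioms (isomorphisms are fibrations and fibrations are closed under composition; there is a terminal object to which every map is a fibration; pullbacks of fibrations along arbitrary maps exist and are fibrations; isomorphisms are equivalences and equivalences satisfy 2-out-of-6; every object has a path object; trivial fibrations are stable under pullback; trivial fibrations have sections). -/

import Mathlib

namespace EffPaper

/-! ### A small kit for tracking by partial computable functions.

We encode "partial computable function" via Mathlib's `Partrec` on `ℕ →. ℕ`.
`CompComputes I O` says: there is a partial computable function which, on the input
`I x`, converges and outputs `O x` (for every `x` in some index type `X`).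
`CompFinds I S` says: there is a partial computable function which, on the input
`I x`, converges and outputs some element of the set `S x`. -/

def CompComputes {X : Sort*} (I O : X → ℕ) : Prop :=
  ∃ F : ℕ →. ℕ, Partrec F ∧ ∀ x, O x ∈ F (I x)

def CompFinds {X : Sort*} (I : X → ℕ) (S : X → Set ℕ) : Prop :=
  ∃ F : ℕ →. ℕ, Partrec F ∧ ∀ x, ∃ k, k ∈ F (I x) ∧ k ∈ S x

namespace CompComputes

protected theorem id {X : Sort*} (I : X → ℕ) : CompComputes I I :=
  ⟨fun n => Part.some n, Partrec.some, fun x => Part.mem_some _⟩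

protected theorem const {X : Sort*} (I : X → ℕ) (c : ℕ) : CompComputes I fun _ => c :=
  ⟨fun _ => Part.some c, (Computable.const c).partrec, fun _ => Part.mem_some _⟩

protected theorem comp {X : Sort*} {I M O : X → ℕ}
    (h₂ : CompComputes M O) (h₁ : CompComputes I M) : CompComputes I O := by
  obtain ⟨F₁, pF₁, s₁⟩ := h₁
  obtain ⟨F₂, pF₂, s₂⟩ := h₂
  refine ⟨fun n => (F₁ n).bind F₂, pF₁.bind (pF₂.comp Computable.snd), fun x => ?_⟩
  exact Part.mem_bind_iff.mpr ⟨M x, s₁ x, s₂ x⟩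

protected theorem pair {X : Sort*} {I a b : X → ℕ}
    (ha : CompComputes I a) (hb : CompComputes I b) :
    CompComputes I (fun x => Nat.pair (a x) (b x)) := by
  obtain ⟨F₁, pF₁, s₁⟩ := ha
  obtain ⟨F₂, pF₂, s₂⟩ := hb
  refine ⟨fun n => (F₁ n).bind fun u => (F₂ n).map fun v => Nat.pair u v, ?_, fun x => ?_⟩
  · refine pF₁.bind ?_
    have : Computable₂ fun (p : ℕ × ℕ) (v : ℕ) => Nat.pair p.2 v :=
      Primrec₂.to_comp (Primrec₂.natPair.comp (Primrec.snd.comp Primrec.fst) Primrec.snd)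
    exact Partrec.map (pF₂.comp Computable.fst) this
  · exact Part.mem_bind_iff.mpr ⟨a x, s₁ x, (Part.mem_map_iff _).mpr ⟨b x, s₂ x, rfl⟩⟩

protected theorem unpairL {X : Sort*} (I : X → ℕ) :
    CompComputes I (fun x => (I x).unpair.1) :=
  ⟨fun n => Part.some n.unpair.1,
    (Primrec.to_comp (Primrec.fst.comp Primrec.unpair)).partrec, fun _ => Part.mem_some _⟩

protected theorem unpairR {X : Sort*} (I : X → ℕ) :
    CompComputes I (fun x => (I x).unpair.2) :=
  ⟨fun n => Part.some n.unpair.2,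
    (Primrec.to_comp (Primrec.snd.comp Primrec.unpair)).partrec, fun _ => Part.mem_some _⟩

protected theorem projL {X : Sort*} (a b : X → ℕ) :
    CompComputes (fun x => Nat.pair (a x) (b x)) a := by
  have := CompComputes.unpairL (X := X) (fun x => Nat.pair (a x) (b x))
  simpa [Nat.unpair_pair] using this

protected theorem projR {X : Sort*} (a b : X → ℕ) :
    CompComputes (fun x => Nat.pair (a x) (b x)) b := by
  have := CompComputes.unpairR (X := X) (fun x => Nat.pair (a x) (b x))
  simpa [Nat.unpair_pair] using this

protected theorem precomp {X Y : Sort*} {I O : X → ℕ} (h : CompComputes I O) (e : Y → X) :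
    CompComputes (fun y => I (e y)) (fun y => O (e y)) := by
  obtain ⟨F, pF, s⟩ := h
  exact ⟨F, pF, fun y => s (e y)⟩

protected theorem toFinds {X : Sort*} {I o : X → ℕ} {S : X → Set ℕ}
    (h : CompComputes I o) (hm : ∀ x, o x ∈ S x) : CompFinds I S := by
  obtain ⟨F, pF, s⟩ := h
  exact ⟨F, pF, fun x => ⟨o x, s x, hm x⟩⟩

end CompComputes

namespace CompFinds

protected theorem toComputes {X : Sort*} {I : X → ℕ} {S : X → Set ℕ} (h : CompFinds I S) :
    ∃ o : X → ℕ, (∀ x, o x ∈ S x) ∧ CompComputes I o := by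
  obtain ⟨F, pF, s⟩ := h
  refine ⟨fun x => (s x).choose, fun x => (s x).choose_spec.2, F, pF, fun x => (s x).choose_spec.1⟩

/-- Reindex a `CompFinds` along `e` and chase the input through a computable function. -/
protected theorem via {Y X : Sort*} {J : X → ℕ} {S : X → Set ℕ} (h : CompFinds J S)
    {I : Y → ℕ} (e : Y → X) (hc : CompComputes I (fun y => J (e y))) :
    CompFinds I (fun y => S (e y)) := by
  obtain ⟨o, hm, hcc⟩ := h.toComputes
  exact CompComputes.toFinds ((hcc.precomp e).comp hc) (fun y => hm (e y))

end CompFinds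

end EffPaper

namespace EffPaper

open CategoryTheory

universe v u

/-! ### Path categories (Van den Berg–Moerdijk style), abstractly.

A `PathStruct` on a category is a pair of classes of maps: fibrations and equivalences.
`IsPathCategory` expresses the seven axioms of a path category. -/

structure PathStruct (C : Type u) [Category.{v} C] where
  Fib : ∀ ⦃X Y : C⦄, (X ⟶ Y) → Prop
  Eqv : ∀ ⦃X Y : C⦄, (X ⟶ Y) → Prop

section PathCatDefs

variable {C : Type u} [Category.{v} C]

/-- `T` is a terminal object. -/
def IsTerminalObj (T : C) : Prop := ∀ Z : C, ∃ f : Z ⟶ T, ∀ g : Z ⟶ T, g = f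

/-- The square with projections `p₁, p₂` is a pullback of the cospan `f, g`. -/
def IsPB {P X Y Z : C} (p₁ : P ⟶ X) (p₂ : P ⟶ Y) (f : X ⟶ Z) (g : Y ⟶ Z) : Prop :=
  p₁ ≫ f = p₂ ≫ g ∧ ∀ (Q : C) (q₁ : Q ⟶ X) (q₂ : Q ⟶ Y), q₁ ≫ f = q₂ ≫ g →
    ∃! h : Q ⟶ P, h ≫ p₁ = q₁ ∧ h ≫ p₂ = q₂

/-- `p₁, p₂` exhibit their common domain as a binary product of `X` and `Y`. -/
def IsBinProd {P X Y : C} (p₁ : P ⟶ X) (p₂ : P ⟶ Y) : Prop :=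
  ∀ (Q : C) (q₁ : Q ⟶ X) (q₂ : Q ⟶ Y), ∃! h : Q ⟶ P, h ≫ p₁ = q₁ ∧ h ≫ p₂ = q₂

variable (S : PathStruct C)

/-- `X → PX → X × X` is a path object for `X`: the first map is an equivalence, the
second (the pairing of `s` and `t` into a binary product `X × X`) is a fibration,
and the composite is the diagonal. -/
def IsPathObj {X PX : C} (r : X ⟶ PX) (s t : PX ⟶ X) : Prop :=
  S.Eqv r ∧ r ≫ s = 𝟙 X ∧ r ≫ t = 𝟙 X ∧
  ∃ (W : C) (π₁ π₂ : W ⟶ X) (h : PX ⟶ W),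
    IsBinProd π₁ π₂ ∧ h ≫ π₁ = s ∧ h ≫ π₂ = t ∧ S.Fib h

/-- A path object for `p : X ⟶ I` in the slice path category `C(I)`:
a factorisation of the fibrewise diagonal `X ⟶ X ×_I X` as an equivalence `r`
followed by a fibration. -/
def IsRelPathObj {X I PX : C} (p : X ⟶ I) (r : X ⟶ PX) (s t : PX ⟶ X) : Prop :=
  S.Eqv r ∧ r ≫ s = 𝟙 X ∧ r ≫ t = 𝟙 X ∧ s ≫ p = t ≫ p ∧
  ∃ (W : C) (π₁ π₂ : W ⟶ X) (h : PX ⟶ W),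
    IsPB π₁ π₂ p p ∧ h ≫ π₁ = s ∧ h ≫ π₂ = t ∧ S.Fib h

/-- The seven axioms for a path category. -/
structure IsPathCategory : Prop where
  fib_of_iso : ∀ {X Y : C} (f : X ⟶ Y), IsIso f → S.Fib f
  fib_comp : ∀ {X Y Z : C} (f : X ⟶ Y) (g : Y ⟶ Z), S.Fib f → S.Fib g → S.Fib (f ≫ g)
  terminal : ∃ T : C, IsTerminalObj T ∧ ∀ (X : C) (f : X ⟶ T), S.Fib f
  pullback : ∀ {X Y Z : C} (f : X ⟶ Z) (g : Y ⟶ Z), S.Fib f →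
    ∃ (P : C) (p₁ : P ⟶ X) (p₂ : P ⟶ Y), IsPB p₁ p₂ f g ∧ S.Fib p₂
  eqv_of_iso : ∀ {X Y : C} (f : X ⟶ Y), IsIso f → S.Eqv f
  two_out_of_six : ∀ {X Y Z W : C} (f : X ⟶ Y) (g : Y ⟶ Z) (h : Z ⟶ W),
    S.Eqv (f ≫ g) → S.Eqv (g ≫ h) →
    S.Eqv f ∧ S.Eqv g ∧ S.Eqv h ∧ S.Eqv (f ≫ g ≫ h)
  path_obj : ∀ X : C, ∃ (PX : C) (r : X ⟶ PX) (s t : PX ⟶ X), IsPathObj S r s t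
  triv_fib_pb : ∀ {X Y Z P : C} (f : X ⟶ Z) (g : Y ⟶ Z) (p₁ : P ⟶ X) (p₂ : P ⟶ Y),
    S.Fib f → S.Eqv f → IsPB p₁ p₂ f g → S.Fib p₂ ∧ S.Eqv p₂
  triv_fib_sect : ∀ {X Y : C} (f : X ⟶ Y), S.Fib f → S.Eqv f → ∃ s : Y ⟶ X, s ≫ f = 𝟙 Y

/-- Two parallel maps are homotopic: `(f,g)` factors through some path object. -/
def Homotopic {Z X : C} (f g : Z ⟶ X) : Prop :=
  ∃ (PX : C) (r : X ⟶ PX) (s t : PX ⟶ X), IsPathObj S r s t ∧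
    ∃ H : Z ⟶ PX, H ≫ s = f ∧ H ≫ t = g

/-- `f` and `g` are fibrewise homotopic over the codomain of `p`:
`(f,g)` factors through some path object of `p` in the slice. -/
def FibHomotopic {Z X I : C} (p : X ⟶ I) (f g : Z ⟶ X) : Prop :=
  ∃ (PX : C) (r : X ⟶ PX) (s t : PX ⟶ X), IsRelPathObj S p r s t ∧
    ∃ H : Z ⟶ PX, H ≫ s = f ∧ H ≫ t = g

/-- `IsNTypeFib S n f` says that `f` is a fibration of `(n-2)`-types; so `n = 0`
corresponds to hlevel `-2` (trivial fibrations), `n = 1` to propositions,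
`n = 2` to sets and `n = 3` to groupoids. -/
def IsNTypeFib : ℕ → ∀ ⦃Y X : C⦄, (Y ⟶ X) → Prop
  | 0, _, _, f => S.Fib f ∧ S.Eqv f
  | n+1, Y, _, f => S.Fib f ∧ ∃ (PY W : C) (r : Y ⟶ PY) (s t : PY ⟶ Y)
      (π₁ π₂ : W ⟶ Y) (h : PY ⟶ W),
      IsRelPathObj S f r s t ∧ IsPB π₁ π₂ f f ∧ h ≫ π₁ = s ∧ h ≫ π₂ = t ∧
      IsNTypeFib n h

/-- The (strictly) commutative square with vertical fibrations `g` (left) and `f` (right),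
top `top` and bottom `bot`, is a homotopy pullback: the induced map to the actual
pullback is an equivalence. -/
def IsHomotopyPB {D Cc B A : C} (g : D ⟶ Cc) (top : D ⟶ B) (f : B ⟶ A) (bot : Cc ⟶ A) :
    Prop :=
  g ≫ bot = top ≫ f ∧ ∃ (P : C) (p₁ : P ⟶ Cc) (p₂ : P ⟶ B) (h : D ⟶ P),
    IsPB p₁ p₂ bot f ∧ h ≫ p₁ = g ∧ h ≫ p₂ = top ∧ S.Eqv h

/-- A transport structure on the fibration `p : Y ⟶ X`, relative to the path object
`(PX, r, s, t)` and the pullback `(Q, q₁, q₂)` of `s : PX ⟶ X` along `p`: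
a map `Γ : Y ×_X PX ⟶ Y` with `p ∘ Γ = t ∘ q₂` and `Γ ∘ (1_Y, r ∘ p) ≃_X 1_Y`. -/
def IsTransport {Y X PX Q : C} (p : Y ⟶ X) (r : X ⟶ PX) (s t : PX ⟶ X)
    (q₁ : Q ⟶ Y) (q₂ : Q ⟶ PX) (Γ : Q ⟶ Y) : Prop :=
  Γ ≫ p = q₂ ≫ t ∧
  ∀ j : Y ⟶ Q, j ≫ q₁ = 𝟙 Y → j ≫ q₂ = p ≫ r → FibHomotopic S p (j ≫ Γ) (𝟙 Y)

/-- A fibration `p : Y ⟶ X` is univalent: whenever `f, g : Z ⟶ X` and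
`w : f*p ⟶ g*p` is an equivalence over `Z`, there is a homotopy `H` from `f` to `g`
such that `w` is fibrewise homotopic over `Z` to the map induced by `H` and a
transport structure on `p`. -/
def Univalent {Y X : C} (p : Y ⟶ X) : Prop :=
  ∀ {Z Zf Zg : C} (f g : Z ⟶ X) (a₁ : Zf ⟶ Z) (a₂ : Zf ⟶ Y) (b₁ : Zg ⟶ Z) (b₂ : Zg ⟶ Y),
    IsPB a₁ a₂ f p → IsPB b₁ b₂ g p →
    ∀ w : Zf ⟶ Zg, w ≫ b₁ = a₁ → S.Eqv w →
    ∃ (PX Q : C) (r : X ⟶ PX) (s t : PX ⟶ X) (q₁ : Q ⟶ Y) (q₂ : Q ⟶ PX) (Γ : Q ⟶ Y)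
      (H : Z ⟶ PX) (k : Zf ⟶ Q) (w' : Zf ⟶ Zg),
      IsPathObj S r s t ∧ IsPB q₁ q₂ p s ∧ IsTransport S p r s t q₁ q₂ Γ ∧
      H ≫ s = f ∧ H ≫ t = g ∧
      k ≫ q₁ = a₂ ∧ k ≫ q₂ = a₁ ≫ H ∧
      w' ≫ b₁ = a₁ ∧ w' ≫ b₂ = k ≫ Γ ∧
      FibHomotopic S b₁ w w'

/-- `π : E ⟶ U` is a representation for the class `Small`: it is small, and every
small fibration is a homotopy pullback of it. -/
def IsRepresentation (Small : ∀ ⦃X Y : C⦄, (X ⟶ Y) → Prop) {E U : C} (π : E ⟶ U) : Prop :=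
  Small π ∧ ∀ ⦃B A : C⦄ (f : B ⟶ A), Small f →
    ∃ (c : A ⟶ U) (top : B ⟶ E), IsHomotopyPB S f top π c

/-- `M` is a good lift for the universal property of the homotopy Π-type
`(pE, u₁, u₂, ε)` of `g` along `f`, at the map `h : A ⟶ X` with chosen pullback
`(Ah, v₁, v₂)` of `h` along `f` and `m : f*h ⟶ g` over `Y`. -/
def HPiLiftGood {Y X Z E F A Ah : C} (f : Y ⟶ X) (g : Z ⟶ Y) (pE : E ⟶ X)
    (u₁ : F ⟶ E) (u₂ : F ⟶ Y) (ε : F ⟶ Z)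
    (h : A ⟶ X) (v₁ : Ah ⟶ A) (v₂ : Ah ⟶ Y) (m : Ah ⟶ Z) (M : A ⟶ E) : Prop :=
  M ≫ pE = h ∧ ∀ fM : Ah ⟶ F, fM ≫ u₁ = v₁ ≫ M → fM ≫ u₂ = v₂ →
    FibHomotopic S g (fM ≫ ε) m

/-- `(pE, u₁, u₂, ε)` is a homotopy Π-type of the fibration `g : Z ⟶ Y` along the
fibration `f : Y ⟶ X`.  Here `pE : E ⟶ X` is the Π-fibration, `(F, u₁, u₂)` is a
pullback of `pE` along `f`, and `ε : f*pE ⟶ g` is the counit (a map over `Y`). -/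
structure IsHPi {Y X Z E F : C} (f : Y ⟶ X) (g : Z ⟶ Y) (pE : E ⟶ X)
    (u₁ : F ⟶ E) (u₂ : F ⟶ Y) (ε : F ⟶ Z) : Prop where
  fib : S.Fib pE
  pb : IsPB u₁ u₂ pE f
  over' : ε ≫ g = u₂
  lift : ∀ {A Ah : C} (h : A ⟶ X) (v₁ : Ah ⟶ A) (v₂ : Ah ⟶ Y), IsPB v₁ v₂ h f →
    ∀ m : Ah ⟶ Z, m ≫ g = v₂ →
      ∃ M : A ⟶ E, HPiLiftGood S f g pE u₁ u₂ ε h v₁ v₂ m M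
  unique : ∀ {A Ah : C} (h : A ⟶ X) (v₁ : Ah ⟶ A) (v₂ : Ah ⟶ Y), IsPB v₁ v₂ h f →
    ∀ m : Ah ⟶ Z, m ≫ g = v₂ → ∀ M M' : A ⟶ E,
      HPiLiftGood S f g pE u₁ u₂ ε h v₁ v₂ m M →
      HPiLiftGood S f g pE u₁ u₂ ε h v₁ v₂ m M' →
      FibHomotopic S pE M M'

/-- The path category has homotopy Π-types. -/
def HasHPi : Prop := ∀ ⦃Y X Z : C⦄ (f : Y ⟶ X) (g : Z ⟶ Y), S.Fib f → S.Fib g →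
  ∃ (E F : C) (pE : E ⟶ X) (u₁ : F ⟶ E) (u₂ : F ⟶ Y) (ε : F ⟶ Z),
    IsHPi S f g pE u₁ u₂ ε

/-- A class of small fibrations: contained in the fibrations, containing all
isomorphisms, closed under composition and stable under homotopy pullback. -/
def IsSmallClass (Small : ∀ ⦃X Y : C⦄, (X ⟶ Y) → Prop) : Prop :=
  (∀ ⦃X Y : C⦄ (f : X ⟶ Y), Small f → S.Fib f) ∧
  (∀ ⦃X Y : C⦄ (f : X ⟶ Y), IsIso f → Small f) ∧
  (∀ ⦃X Y Z : C⦄ (f : X ⟶ Y) (g : Y ⟶ Z), Small f → Small g → Small (f ≫ g)) ∧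
  (∀ ⦃D Cc B A : C⦄ (g : D ⟶ Cc) (top : D ⟶ B) (f : B ⟶ A) (bot : Cc ⟶ A),
    S.Fib g → S.Fib f → Small f → IsHomotopyPB S g top f bot → Small g)

/-- The class `Small` is closed under homotopy Π-types along arbitrary fibrations:
it is impredicative (polymorphic). -/
def ClosedUnderHPi (Small : ∀ ⦃X Y : C⦄, (X ⟶ Y) → Prop) : Prop :=
  ∀ ⦃Y X Z : C⦄ (f : Y ⟶ X) (g : Z ⟶ Y), S.Fib f → Small g →
    ∀ ⦃E F : C⦄ (pE : E ⟶ X) (u₁ : F ⟶ E) (u₂ : F ⟶ Y) (ε : F ⟶ Z),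
      IsHPi S f g pE u₁ u₂ ε → Small pE

end PathCatDefs

end EffPaper
open CategoryTheory
namespace EffPaper
-- [assume p1 kit present]

/-! ### The category `EFF`. -/

/-- An object of `EFF`: a set `A`, a realizer function `α : A → ℕ`, sets of 1-cells
`hom a a' ⊆ ℕ`, and partial computable functions computing identity, inverse and
composite 1-cells from the realizers of the relevant data. -/
structure EffObj : Type 1 where
  A : Type
  α : A → ℕ
  hom : A → A → Set ℕ
  idc : CompFinds (fun a : A => α a) (fun a => hom a a)
  invc : CompFinds
    (fun x : {p : A × A × ℕ // p.2.2 ∈ hom p.1 p.2.1} =>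
      Nat.pair (α x.1.1) (Nat.pair (α x.1.2.1) x.1.2.2))
    (fun x => hom x.1.2.1 x.1.1)
  compc : CompFinds
    (fun x : {p : A × A × A × ℕ × ℕ //
        p.2.2.2.1 ∈ hom p.1 p.2.1 ∧ p.2.2.2.2 ∈ hom p.2.1 p.2.2.1} =>
      Nat.pair (α x.1.1) (Nat.pair (α x.1.2.1) (Nat.pair (α x.1.2.2.1)
        (Nat.pair x.1.2.2.2.1 x.1.2.2.2.2))))
    (fun x => hom x.1.1 x.1.2.2.1)

/-- The 1-cells of an object of `EFF` between `a` and `a'`. -/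
def EffObj.Cell (A : EffObj) (a a' : A.A) : Type := {n : ℕ // n ∈ A.hom a a'}

/-- A morphism of `EFF`: a function on 0-cells and functions on 1-cells, both
computably tracked. -/
structure EffHom (B A : EffObj) : Type where
  f0 : B.A → A.A
  f1 : ∀ b b' : B.A, B.Cell b b' → A.Cell (f0 b) (f0 b')
  tr0 : CompComputes (fun b : B.A => B.α b) (fun b => A.α (f0 b))
  tr1 : CompComputes
    (fun x : (b : B.A) × (b' : B.A) × B.Cell b b' =>
      Nat.pair (B.α x.1) (Nat.pair (B.α x.2.1) x.2.2.val))
    (fun x => (f1 x.1 x.2.1 x.2.2).val)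

instance : Category.{0} EffObj where
  Hom B A := EffHom B A
  id A :=
    { f0 := fun a => a
      f1 := fun _ _ π => π
      tr0 := CompComputes.id _
      tr1 := (CompComputes.projR _ _).comp (CompComputes.projR _ _) }
  comp {X Y Z} f g :=
    { f0 := fun b => g.f0 (f.f0 b)
      f1 := fun b b' π => g.f1 _ _ (f.f1 b b' π)
      tr0 := (g.tr0.precomp f.f0).comp f.tr0
      tr1 := by
        have hg := g.tr1.precomp
          (fun x : (b : X.A) × (b' : X.A) × X.Cell b b' =>
            (⟨f.f0 x.1, f.f0 x.2.1, f.f1 x.1 x.2.1 x.2.2⟩ :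
              (b : Y.A) × (b' : Y.A) × Y.Cell b b'))
        refine hg.comp ?_
        refine CompComputes.pair ?_ (CompComputes.pair ?_ f.tr1)
        · exact (f.tr0.precomp (fun x : (b : X.A) × (b' : X.A) × X.Cell b b' => x.1)).comp (CompComputes.projL _ _)
        · exact (f.tr0.precomp (fun x : (b : X.A) × (b' : X.A) × X.Cell b b' => x.2.1)).comp
            ((CompComputes.projL _ _).comp (CompComputes.projR _ _)) }

end EffPaper
namespace EffPaper
open CategoryTheory

/-! ### Homotopies, equivalences and fibrations in `EFF`. -/

/-- Two parallel maps in `EFF` are homotopic if there is a partial computable function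
computing, from the realizer of each `b`, a 1-cell from `f b` to `g b`. -/
def EffHomotopic {B A : EffObj} (f g : EffHom B A) : Prop :=
  CompFinds (fun b : B.A => B.α b) (fun b => A.hom (f.f0 b) (g.f0 b))

/-- A map in `EFF` is a (homotopy) equivalence if it has a homotopy inverse. -/
def EffEqv {B A : EffObj} (f : B ⟶ A) : Prop :=
  ∃ g : A ⟶ B, EffHomotopic (f ≫ g) (𝟙 B) ∧ EffHomotopic (g ≫ f) (𝟙 A)

/-- A map in `EFF` is a fibration: (i) 1-cells `π : f b → a` downstairs can be
computably lifted to 1-cells `ρ : b → b'` upstairs with `f b' = a`, `f ρ = π`;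
(ii) given `ρ ∈ ℬ(b,b')` and `π ∈ 𝒜(fb,fb')` one can compute `ρ' ∈ ℬ(b,b')`
with `f ρ' = π`. -/
def EffFib {B A : EffObj} (f : B ⟶ A) : Prop :=
  (∃ φ ψ : ℕ →. ℕ, Partrec φ ∧ Partrec ψ ∧
    ∀ (b : B.A) (a : A.A) (π : ℕ), π ∈ A.hom (f.f0 b) a →
      ∃ (b' : B.A) (ρ : B.Cell b b'),
        f.f0 b' = a ∧ (f.f1 b b' ρ).val = π ∧
        B.α b' ∈ φ (Nat.pair (B.α b) (Nat.pair (A.α a) π)) ∧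
        ρ.val ∈ ψ (Nat.pair (B.α b) (Nat.pair (A.α a) π))) ∧
  (∃ χ : ℕ →. ℕ, Partrec χ ∧
    ∀ (b b' : B.A) (ρ : B.Cell b b') (π : ℕ), π ∈ A.hom (f.f0 b) (f.f0 b') →
      ∃ ρ' : B.Cell b b', (f.f1 b b' ρ').val = π ∧
        ρ'.val ∈ χ (Nat.pair (B.α b) (Nat.pair (B.α b') (Nat.pair ρ.val π))))

/-- The path structure on `EFF`: fibrations and (homotopy) equivalences. -/
def EffPS : PathStruct EffObj where
  Fib := fun {_ _} f => EffFib f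
  Eqv := fun {_ _} f => EffEqv f

/-- A fibration in `EFF` is a standard discrete fibration if elements of the domain
are determined by their image and their realizer. -/
def EffStdDisc {B A : EffObj} (f : B ⟶ A) : Prop :=
  EffFib f ∧ ∀ b b' : B.A, f.f0 b = f.f0 b' → B.α b = B.α b' → b = b'

/-- A fibration in `EFF` is discrete if it can be written as a standard discrete
fibration after an equivalence. -/
def EffDisc {B A : EffObj} (f : B ⟶ A) : Prop :=
  EffFib f ∧ ∃ (B' : EffObj) (w : B ⟶ B') (g : B' ⟶ A),
    EffEqv w ∧ EffStdDisc g ∧ w ≫ g = f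

end EffPaper
namespace EffPaper
open CategoryTheory

/-! ### Auxiliary infrastructure for the main theorem. -/

section KitExtras

theorem CompComputes.ofEq {X : Sort*} {I O O' : X → ℕ} (h : CompComputes I O)
    (he : ∀ x, O x = O' x) : CompComputes I O' := by
  obtain ⟨F, pF, s⟩ := h; exact ⟨F, pF, fun x => he x ▸ s x⟩

theorem CompComputes.proj31 {X : Sort*} (a b c : X → ℕ) :
    CompComputes (fun x => Nat.pair (a x) (Nat.pair (b x) (c x))) a :=
  CompComputes.projL _ _

theorem CompComputes.proj32 {X : Sort*} (a b c : X → ℕ) :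
    CompComputes (fun x => Nat.pair (a x) (Nat.pair (b x) (c x))) b :=
  (CompComputes.projL b c).comp (CompComputes.projR _ _)

theorem CompComputes.proj33 {X : Sort*} (a b c : X → ℕ) :
    CompComputes (fun x => Nat.pair (a x) (Nat.pair (b x) (c x))) c :=
  (CompComputes.projR b c).comp (CompComputes.projR _ _)

theorem CompComputes.proj41 {X : Sort*} (a b c d : X → ℕ) :
    CompComputes (fun x => Nat.pair (a x) (Nat.pair (b x) (Nat.pair (c x) (d x)))) a :=
  CompComputes.projL _ _

theorem CompComputes.proj42 {X : Sort*} (a b c d : X → ℕ) :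
    CompComputes (fun x => Nat.pair (a x) (Nat.pair (b x) (Nat.pair (c x) (d x)))) b :=
  (CompComputes.proj31 b c d).comp (CompComputes.projR _ _)

theorem CompComputes.proj43 {X : Sort*} (a b c d : X → ℕ) :
    CompComputes (fun x => Nat.pair (a x) (Nat.pair (b x) (Nat.pair (c x) (d x)))) c :=
  (CompComputes.proj32 b c d).comp (CompComputes.projR _ _)

theorem CompComputes.proj44 {X : Sort*} (a b c d : X → ℕ) :
    CompComputes (fun x => Nat.pair (a x) (Nat.pair (b x) (Nat.pair (c x) (d x)))) d :=
  (CompComputes.proj33 b c d).comp (CompComputes.projR _ _)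

theorem CompComputes.proj51 {X : Sort*} (a b c d e : X → ℕ) :
    CompComputes (fun x => Nat.pair (a x) (Nat.pair (b x) (Nat.pair (c x)
      (Nat.pair (d x) (e x))))) a :=
  CompComputes.projL _ _

theorem CompComputes.proj52 {X : Sort*} (a b c d e : X → ℕ) :
    CompComputes (fun x => Nat.pair (a x) (Nat.pair (b x) (Nat.pair (c x)
      (Nat.pair (d x) (e x))))) b :=
  (CompComputes.proj41 b c d e).comp (CompComputes.projR _ _)

theorem CompComputes.proj53 {X : Sort*} (a b c d e : X → ℕ) :
    CompComputes (fun x => Nat.pair (a x) (Nat.pair (b x) (Nat.pair (c x)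
      (Nat.pair (d x) (e x))))) c :=
  (CompComputes.proj42 b c d e).comp (CompComputes.projR _ _)

theorem CompComputes.proj54 {X : Sort*} (a b c d e : X → ℕ) :
    CompComputes (fun x => Nat.pair (a x) (Nat.pair (b x) (Nat.pair (c x)
      (Nat.pair (d x) (e x))))) d :=
  (CompComputes.proj43 b c d e).comp (CompComputes.projR _ _)

theorem CompComputes.proj55 {X : Sort*} (a b c d e : X → ℕ) :
    CompComputes (fun x => Nat.pair (a x) (Nat.pair (b x) (Nat.pair (c x)
      (Nat.pair (d x) (e x))))) e :=
  (CompComputes.proj44 b c d e).comp (CompComputes.projR _ _)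

theorem CompComputes.unpair1 {X : Sort*} {I v : X → ℕ} (h : CompComputes I v) :
    CompComputes I (fun x => (v x).unpair.1) :=
  (CompComputes.unpairL v).comp h

theorem CompComputes.unpair2 {X : Sort*} {I v : X → ℕ} (h : CompComputes I v) :
    CompComputes I (fun x => (v x).unpair.2) :=
  (CompComputes.unpairR v).comp h

end KitExtras

section ExtLemmas

theorem EffHom.ext_val {B A : EffObj} {f g : EffHom B A} (h0 : ∀ b, f.f0 b = g.f0 b)
    (h1 : ∀ (b b' : B.A) (ρ : B.Cell b b'), (f.f1 b b' ρ).val = (g.f1 b b' ρ).val) :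
    f = g := by
  obtain ⟨f0, f1, ft0, ft1⟩ := f
  obtain ⟨g0, g1, gt0, gt1⟩ := g
  obtain rfl : f0 = g0 := funext h0
  obtain rfl : f1 = g1 := by
    funext b b' ρ
    exact Subtype.ext (h1 b b' ρ)
  rfl

theorem EffHom.congr_f0 {B A : EffObj} {f g : EffHom B A} (h : f = g) (b : B.A) :
    f.f0 b = g.f0 b := by rw [h]

theorem EffHom.congr_f1 {B A : EffObj} {f g : EffHom B A} (h : f = g) (b b' : B.A)
    (ρ : B.Cell b b') : (f.f1 b b' ρ).val = (g.f1 b b' ρ).val := by subst h; rfl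

theorem EffHom.f1_val_congr {B A : EffObj} (f : EffHom B A) {b₁ b₂ b₁' b₂' : B.A}
    (e₁ : b₁ = b₁') (e₂ : b₂ = b₂') (ρ : B.Cell b₁ b₂) (ρ' : B.Cell b₁' b₂')
    (hv : ρ.val = ρ'.val) : (f.f1 b₁ b₂ ρ).val = (f.f1 b₁' b₂' ρ').val := by
  subst e₁; subst e₂
  obtain rfl : ρ = ρ' := Subtype.ext hv
  rfl

end ExtLemmas

section CellLemmas

theorem effHomotopic_iff {B A : EffObj} {f g : EffHom B A} :
    EffHomotopic f g ↔
      ∃ c : ∀ b, A.Cell (f.f0 b) (g.f0 b),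
        CompComputes (fun b : B.A => B.α b) (fun b => (c b).val) := by
  constructor
  · intro h
    obtain ⟨o, hm, hc⟩ := h.toComputes
    exact ⟨fun b => ⟨o b, hm b⟩, hc⟩
  · rintro ⟨c, hc⟩
    exact hc.toFinds fun b => (c b).prop

theorem EffObj.idCell (A : EffObj) :
    ∃ i : ∀ a : A.A, A.Cell a a,
      CompComputes (fun a : A.A => A.α a) (fun a => (i a).val) := by
  obtain ⟨o, hm, hc⟩ := A.idc.toComputes
  exact ⟨fun a => ⟨o a, hm a⟩, hc⟩

theorem EffObj.invCell (A : EffObj) {X : Sort*} {I : X → ℕ} {a a' : X → A.A}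
    (c : ∀ x, A.Cell (a x) (a' x))
    (ha : CompComputes I (fun x => A.α (a x)))
    (ha' : CompComputes I (fun x => A.α (a' x)))
    (hc : CompComputes I (fun x => (c x).val)) :
    ∃ c' : ∀ x, A.Cell (a' x) (a x), CompComputes I (fun x => (c' x).val) := by
  have h := A.invc.via (I := I)
      (fun x => ⟨(a x, a' x, (c x).val), (c x).prop⟩)
      (ha.pair (ha'.pair hc))
  obtain ⟨o, hm, hco⟩ := h.toComputes
  exact ⟨fun x => ⟨o x, hm x⟩, hco⟩

theorem EffObj.compCell (A : EffObj) {X : Sort*} {I : X → ℕ} {a b c : X → A.A}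
    (p : ∀ x, A.Cell (a x) (b x)) (q : ∀ x, A.Cell (b x) (c x))
    (ha : CompComputes I (fun x => A.α (a x)))
    (hb : CompComputes I (fun x => A.α (b x)))
    (hcc : CompComputes I (fun x => A.α (c x)))
    (hp : CompComputes I (fun x => (p x).val))
    (hq : CompComputes I (fun x => (q x).val)) :
    ∃ r : ∀ x, A.Cell (a x) (c x), CompComputes I (fun x => (r x).val) := by
  have h := A.compc.via (I := I)
      (fun x => ⟨(a x, b x, c x, (p x).val, (q x).val), ⟨(p x).prop, (q x).prop⟩⟩)
      (ha.pair (hb.pair (hcc.pair (hp.pair hq))))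
  obtain ⟨o, hm, hco⟩ := h.toComputes
  exact ⟨fun x => ⟨o x, hm x⟩, hco⟩

end CellLemmas

section HomotopyLemmas

theorem EffHomotopic.refl {B A : EffObj} (f : EffHom B A) : EffHomotopic f f := by
  obtain ⟨i, hi⟩ := A.idCell
  exact effHomotopic_iff.mpr ⟨fun b => i (f.f0 b), (hi.precomp f.f0).comp f.tr0⟩

theorem EffHomotopic.of_eq {B A : EffObj} {f g : EffHom B A} (h : f = g) :
    EffHomotopic f g := h ▸ EffHomotopic.refl f

theorem EffHomotopic.symm {B A : EffObj} {f g : EffHom B A} (h : EffHomotopic f g) :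
    EffHomotopic g f := by
  obtain ⟨c, hc⟩ := effHomotopic_iff.mp h
  obtain ⟨c', hc'⟩ := A.invCell c f.tr0 g.tr0 hc
  exact effHomotopic_iff.mpr ⟨c', hc'⟩

theorem EffHomotopic.trans {B A : EffObj} {f g k : EffHom B A}
    (h₁ : EffHomotopic f g) (h₂ : EffHomotopic g k) : EffHomotopic f k := by
  obtain ⟨c, hc⟩ := effHomotopic_iff.mp h₁
  obtain ⟨d, hd⟩ := effHomotopic_iff.mp h₂
  obtain ⟨r, hr⟩ := A.compCell c d f.tr0 g.tr0 k.tr0 hc hd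
  exact effHomotopic_iff.mpr ⟨r, hr⟩

theorem EffHomotopic.whisker_left {C B A : EffObj} (e : C ⟶ B) {f g : B ⟶ A}
    (h : EffHomotopic f g) : EffHomotopic (e ≫ f) (e ≫ g) := by
  obtain ⟨c, hc⟩ := effHomotopic_iff.mp h
  exact effHomotopic_iff.mpr ⟨fun x => c (e.f0 x), (hc.precomp e.f0).comp e.tr0⟩

theorem EffHomotopic.whisker_right {B A C : EffObj} {f g : B ⟶ A} (k : A ⟶ C)
    (h : EffHomotopic f g) : EffHomotopic (f ≫ k) (g ≫ k) := by
  obtain ⟨c, hc⟩ := effHomotopic_iff.mp h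
  refine effHomotopic_iff.mpr ⟨fun b => k.f1 _ _ (c b), ?_⟩
  have := k.tr1.precomp
    (fun b : B.A => (⟨f.f0 b, g.f0 b, c b⟩ : (a : A.A) × (a' : A.A) × A.Cell a a'))
  exact this.comp (f.tr0.pair (g.tr0.pair hc))

theorem EffEqv.comp {X Y Z : EffObj} {f : X ⟶ Y} {g : Y ⟶ Z}
    (hf : EffEqv f) (hg : EffEqv g) : EffEqv (f ≫ g) := by
  obtain ⟨f', hf1, hf2⟩ := hf
  obtain ⟨g', hg1, hg2⟩ := hg
  refine ⟨g' ≫ f', ?_, ?_⟩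
  · have h1 : EffHomotopic ((g ≫ g') ≫ f') f' := by
      simpa using hg1.whisker_right f'
    have h2 := h1.whisker_left f
    exact ((EffHomotopic.of_eq (by simp)).trans h2).trans hf1
  · have h1 : EffHomotopic ((f' ≫ f) ≫ g) g := by
      simpa using hf2.whisker_right g
    have h2 := h1.whisker_left g'
    exact ((EffHomotopic.of_eq (by simp)).trans h2).trans hg2

theorem effEqv_of_iso {X Y : EffObj} (f : X ⟶ Y) (h : IsIso f) : EffEqv f := by
  refine ⟨inv f, ?_, ?_⟩
  · exact EffHomotopic.of_eq (IsIso.hom_inv_id f)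
  · exact EffHomotopic.of_eq (IsIso.inv_hom_id f)

end HomotopyLemmas

section FibData

variable {B A : EffObj}

/-- Structured (chosen) data witnessing that `f` is a fibration. -/
structure FibData (f : EffHom B A) : Type where
  L0 : {p : B.A × A.A × ℕ // p.2.2 ∈ A.hom (f.f0 p.1) p.2.1} → B.A
  L1 : ∀ x, B.Cell x.val.1 (L0 x)
  hL0 : ∀ x, f.f0 (L0 x) = x.val.2.1
  hL1 : ∀ x, (f.f1 x.val.1 (L0 x) (L1 x)).val = x.val.2.2
  cL0 : CompComputes
    (fun x => Nat.pair (B.α x.val.1) (Nat.pair (A.α x.val.2.1) x.val.2.2))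
    (fun x => B.α (L0 x))
  cL1 : CompComputes
    (fun x => Nat.pair (B.α x.val.1) (Nat.pair (A.α x.val.2.1) x.val.2.2))
    (fun x => (L1 x).val)
  T1 : ∀ x : {p : B.A × B.A × ℕ × ℕ //
      p.2.2.1 ∈ B.hom p.1 p.2.1 ∧ p.2.2.2 ∈ A.hom (f.f0 p.1) (f.f0 p.2.1)},
      B.Cell x.val.1 x.val.2.1
  hT1 : ∀ x, (f.f1 x.val.1 x.val.2.1 (T1 x)).val = x.val.2.2.2
  cT1 : CompComputes
    (fun x => Nat.pair (B.α x.val.1) (Nat.pair (B.α x.val.2.1)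
      (Nat.pair x.val.2.2.1 x.val.2.2.2)))
    (fun x => (T1 x).val)

theorem EffFib.fibData {f : EffHom B A} (hf : EffFib f) : Nonempty (FibData f) := by
  obtain ⟨⟨φ, ψ, pφ, pψ, hlift⟩, ⟨χ, pχ, htr⟩⟩ := hf
  choose L0 L1 hL0 hL1 hφ hψ using
    fun x : {p : B.A × A.A × ℕ // p.2.2 ∈ A.hom (f.f0 p.1) p.2.1} =>
      hlift x.val.1 x.val.2.1 x.val.2.2 x.prop
  choose T1 hT1 hχ using
    fun x : {p : B.A × B.A × ℕ × ℕ //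
        p.2.2.1 ∈ B.hom p.1 p.2.1 ∧ p.2.2.2 ∈ A.hom (f.f0 p.1) (f.f0 p.2.1)} =>
      htr x.val.1 x.val.2.1 ⟨x.val.2.2.1, x.prop.1⟩ x.val.2.2.2 x.prop.2
  exact ⟨⟨L0, L1, hL0, hL1, ⟨φ, pφ, hφ⟩, ⟨ψ, pψ, hψ⟩, T1, hT1, ⟨χ, pχ, hχ⟩⟩⟩

theorem FibData.effFib {f : EffHom B A} (d : FibData f) : EffFib f := by
  obtain ⟨F₀, pF₀, s₀⟩ := d.cL0
  obtain ⟨F₁, pF₁, s₁⟩ := d.cL1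
  obtain ⟨F₂, pF₂, s₂⟩ := d.cT1
  constructor
  · refine ⟨F₀, F₁, pF₀, pF₁, fun b a π hπ => ?_⟩
    exact ⟨d.L0 ⟨(b, a, π), hπ⟩, d.L1 ⟨(b, a, π), hπ⟩, d.hL0 ⟨(b, a, π), hπ⟩,
      d.hL1 ⟨(b, a, π), hπ⟩, s₀ ⟨(b, a, π), hπ⟩, s₁ ⟨(b, a, π), hπ⟩⟩
  · refine ⟨F₂, pF₂, fun b b' ρ π hπ => ?_⟩
    exact ⟨d.T1 ⟨(b, b', ρ.val, π), ⟨ρ.prop, hπ⟩⟩, d.hT1 ⟨(b, b', ρ.val, π), ⟨ρ.prop, hπ⟩⟩,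
      s₂ ⟨(b, b', ρ.val, π), ⟨ρ.prop, hπ⟩⟩⟩

end FibData

theorem mem_hom_congr {A : EffObj} {a₁ a₂ b₁ b₂ : A.A} (h₁ : a₁ = b₁) (h₂ : a₂ = b₂)
    {n : ℕ} (h : n ∈ A.hom a₁ a₂) : n ∈ A.hom b₁ b₂ := h₁ ▸ h₂ ▸ h

section FibLemmas

theorem effFib_of_iso {B A : EffObj} (f : B ⟶ A) (hIso : IsIso f) : EffFib f := by
  obtain ⟨g, hfg, hgf⟩ := hIso.out
  have e1 : ∀ b, g.f0 (f.f0 b) = b := fun b => EffHom.congr_f0 hfg b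
  have e2 : ∀ a, f.f0 (g.f0 a) = a := fun a => EffHom.congr_f0 hgf a
  let L1 : ∀ x : {p : B.A × A.A × ℕ // p.2.2 ∈ A.hom (f.f0 p.1) p.2.1},
      B.Cell x.val.1 (g.f0 x.val.2.1) :=
    fun x => ⟨(g.f1 (f.f0 x.val.1) x.val.2.1 ⟨x.val.2.2, x.prop⟩).val,
      mem_hom_congr (e1 x.val.1) rfl
        (g.f1 (f.f0 x.val.1) x.val.2.1 ⟨x.val.2.2, x.prop⟩).prop⟩
  let T1 : ∀ x : {p : B.A × B.A × ℕ × ℕ //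
      p.2.2.1 ∈ B.hom p.1 p.2.1 ∧ p.2.2.2 ∈ A.hom (f.f0 p.1) (f.f0 p.2.1)},
      B.Cell x.val.1 x.val.2.1 :=
    fun x => ⟨(g.f1 (f.f0 x.val.1) (f.f0 x.val.2.1) ⟨x.val.2.2.2, x.prop.2⟩).val,
      mem_hom_congr (e1 x.val.1) (e1 x.val.2.1)
        (g.f1 (f.f0 x.val.1) (f.f0 x.val.2.1) ⟨x.val.2.2.2, x.prop.2⟩).prop⟩
  refine FibData.effFib
    { L0 := fun x => g.f0 x.val.2.1
      L1 := L1
      hL0 := fun x => e2 _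
      hL1 := fun x => by
        have h1 := f.f1_val_congr (e1 x.val.1).symm rfl (L1 x)
          (g.f1 (f.f0 x.val.1) x.val.2.1 ⟨x.val.2.2, x.prop⟩) rfl
        rw [h1]
        exact EffHom.congr_f1 hgf (f.f0 x.val.1) x.val.2.1 ⟨x.val.2.2, x.prop⟩
      cL0 := (g.tr0.precomp (fun x : {p : B.A × A.A × ℕ // p.2.2 ∈ A.hom (f.f0 p.1) p.2.1} => x.val.2.1)).comp (CompComputes.proj32 _ _ _)
      cL1 := by
        have h := g.tr1.precomp
          (fun x : {p : B.A × A.A × ℕ // p.2.2 ∈ A.hom (f.f0 p.1) p.2.1} =>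
            (⟨f.f0 x.val.1, x.val.2.1, ⟨x.val.2.2, x.prop⟩⟩ :
              (a : A.A) × (a' : A.A) × A.Cell a a'))
        exact h.comp (CompComputes.pair
          ((f.tr0.precomp (fun x : {p : B.A × A.A × ℕ // p.2.2 ∈ A.hom (f.f0 p.1) p.2.1} => x.val.1)).comp
            (CompComputes.proj31 _ _ _))
          (CompComputes.pair (CompComputes.proj32 _ _ _) (CompComputes.proj33 _ _ _)))
      T1 := T1
      hT1 := fun x => by
        have h1 := f.f1_val_congr (e1 x.val.1).symm (e1 x.val.2.1).symm (T1 x)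
          (g.f1 (f.f0 x.val.1) (f.f0 x.val.2.1) ⟨x.val.2.2.2, x.prop.2⟩) rfl
        rw [h1]
        exact EffHom.congr_f1 hgf (f.f0 x.val.1) (f.f0 x.val.2.1) ⟨x.val.2.2.2, x.prop.2⟩
      cT1 := by
        have h := g.tr1.precomp
          (fun x : {p : B.A × B.A × ℕ × ℕ //
              p.2.2.1 ∈ B.hom p.1 p.2.1 ∧ p.2.2.2 ∈ A.hom (f.f0 p.1) (f.f0 p.2.1)} =>
            (⟨f.f0 x.val.1, f.f0 x.val.2.1, ⟨x.val.2.2.2, x.prop.2⟩⟩ :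
              (a : A.A) × (a' : A.A) × A.Cell a a'))
        exact h.comp (CompComputes.pair
          ((f.tr0.precomp (fun x : {p : B.A × B.A × ℕ × ℕ //
              p.2.2.1 ∈ B.hom p.1 p.2.1 ∧ p.2.2.2 ∈ A.hom (f.f0 p.1) (f.f0 p.2.1)} => x.val.1)).comp
            (CompComputes.proj41 _ _ _ _))
          (CompComputes.pair
            ((f.tr0.precomp (fun x : {p : B.A × B.A × ℕ × ℕ //
              p.2.2.1 ∈ B.hom p.1 p.2.1 ∧ p.2.2.2 ∈ A.hom (f.f0 p.1) (f.f0 p.2.1)} => x.val.2.1)).comp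
              (CompComputes.proj42 _ _ _ _))
            (CompComputes.proj44 _ _ _ _))) }

theorem effFib_comp {X Y Z : EffObj} {f : X ⟶ Y} {g : Y ⟶ Z}
    (hf : EffFib f) (hg : EffFib g) : EffFib (f ≫ g) := by
  obtain ⟨df⟩ := hf.fibData
  obtain ⟨dg⟩ := hg.fibData
  -- lifting data
  let eg : {p : X.A × Z.A × ℕ // p.2.2 ∈ Z.hom ((f ≫ g).f0 p.1) p.2.1} →
      {p : Y.A × Z.A × ℕ // p.2.2 ∈ Z.hom (g.f0 p.1) p.2.1} :=
    fun x => ⟨(f.f0 x.val.1, x.val.2.1, x.val.2.2), x.prop⟩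
  let ef : {p : X.A × Z.A × ℕ // p.2.2 ∈ Z.hom ((f ≫ g).f0 p.1) p.2.1} →
      {p : X.A × Y.A × ℕ // p.2.2 ∈ Y.hom (f.f0 p.1) p.2.1} :=
    fun x => ⟨(x.val.1, dg.L0 (eg x), (dg.L1 (eg x)).val), (dg.L1 (eg x)).prop⟩
  have heg : CompComputes
      (fun x : {p : X.A × Z.A × ℕ // p.2.2 ∈ Z.hom ((f ≫ g).f0 p.1) p.2.1} =>
        Nat.pair (X.α x.val.1) (Nat.pair (Z.α x.val.2.1) x.val.2.2))
      (fun x => Nat.pair (Y.α (f.f0 x.val.1))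
        (Nat.pair (Z.α x.val.2.1) x.val.2.2)) :=
    CompComputes.pair
      ((f.tr0.precomp (fun x : {p : X.A × Z.A × ℕ // p.2.2 ∈ Z.hom ((f ≫ g).f0 p.1) p.2.1} => x.val.1)).comp
        (CompComputes.proj31 _ _ _))
      (CompComputes.pair (CompComputes.proj32 _ _ _) (CompComputes.proj33 _ _ _))
  have hY := (dg.cL0.precomp eg).comp heg
  have hσ := (dg.cL1.precomp eg).comp heg
  have hef : CompComputes
      (fun x : {p : X.A × Z.A × ℕ // p.2.2 ∈ Z.hom ((f ≫ g).f0 p.1) p.2.1} =>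
        Nat.pair (X.α x.val.1) (Nat.pair (Z.α x.val.2.1) x.val.2.2))
      (fun x => Nat.pair (X.α x.val.1)
        (Nat.pair (Y.α (dg.L0 (eg x))) (dg.L1 (eg x)).val)) :=
    CompComputes.pair (CompComputes.proj31 _ _ _) (CompComputes.pair hY hσ)
  -- transport data
  let τ : ∀ x : {p : X.A × X.A × ℕ × ℕ // p.2.2.1 ∈ X.hom p.1 p.2.1 ∧
        p.2.2.2 ∈ Z.hom ((f ≫ g).f0 p.1) ((f ≫ g).f0 p.2.1)},
      Y.Cell (f.f0 x.val.1) (f.f0 x.val.2.1) :=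
    fun x => f.f1 x.val.1 x.val.2.1 ⟨x.val.2.2.1, x.prop.1⟩
  let et : {p : X.A × X.A × ℕ × ℕ // p.2.2.1 ∈ X.hom p.1 p.2.1 ∧
        p.2.2.2 ∈ Z.hom ((f ≫ g).f0 p.1) ((f ≫ g).f0 p.2.1)} →
      {p : Y.A × Y.A × ℕ × ℕ // p.2.2.1 ∈ Y.hom p.1 p.2.1 ∧
        p.2.2.2 ∈ Z.hom (g.f0 p.1) (g.f0 p.2.1)} :=
    fun x => ⟨(f.f0 x.val.1, f.f0 x.val.2.1, (τ x).val, x.val.2.2.2),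
      ⟨(τ x).prop, x.prop.2⟩⟩
  let exf : {p : X.A × X.A × ℕ × ℕ // p.2.2.1 ∈ X.hom p.1 p.2.1 ∧
        p.2.2.2 ∈ Z.hom ((f ≫ g).f0 p.1) ((f ≫ g).f0 p.2.1)} →
      {p : X.A × X.A × ℕ × ℕ // p.2.2.1 ∈ X.hom p.1 p.2.1 ∧
        p.2.2.2 ∈ Y.hom (f.f0 p.1) (f.f0 p.2.1)} :=
    fun x => ⟨(x.val.1, x.val.2.1, x.val.2.2.1, (dg.T1 (et x)).val),
      ⟨x.prop.1, (dg.T1 (et x)).prop⟩⟩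
  have hτ : CompComputes
      (fun x : {p : X.A × X.A × ℕ × ℕ // p.2.2.1 ∈ X.hom p.1 p.2.1 ∧
          p.2.2.2 ∈ Z.hom ((f ≫ g).f0 p.1) ((f ≫ g).f0 p.2.1)} =>
        Nat.pair (X.α x.val.1) (Nat.pair (X.α x.val.2.1)
          (Nat.pair x.val.2.2.1 x.val.2.2.2)))
      (fun x => (τ x).val) := by
    have h := f.tr1.precomp
      (fun x : {p : X.A × X.A × ℕ × ℕ // p.2.2.1 ∈ X.hom p.1 p.2.1 ∧
          p.2.2.2 ∈ Z.hom ((f ≫ g).f0 p.1) ((f ≫ g).f0 p.2.1)} =>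
        (⟨x.val.1, x.val.2.1, ⟨x.val.2.2.1, x.prop.1⟩⟩ :
          (b : X.A) × (b' : X.A) × X.Cell b b'))
    exact h.comp (CompComputes.pair (CompComputes.proj41 _ _ _ _)
      (CompComputes.pair (CompComputes.proj42 _ _ _ _) (CompComputes.proj43 _ _ _ _)))
  have het : CompComputes
      (fun x : {p : X.A × X.A × ℕ × ℕ // p.2.2.1 ∈ X.hom p.1 p.2.1 ∧
          p.2.2.2 ∈ Z.hom ((f ≫ g).f0 p.1) ((f ≫ g).f0 p.2.1)} =>
        Nat.pair (X.α x.val.1) (Nat.pair (X.α x.val.2.1)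
          (Nat.pair x.val.2.2.1 x.val.2.2.2)))
      (fun x => Nat.pair (Y.α (f.f0 x.val.1)) (Nat.pair (Y.α (f.f0 x.val.2.1))
        (Nat.pair (τ x).val x.val.2.2.2))) :=
    CompComputes.pair
      ((f.tr0.precomp (fun x : {p : X.A × X.A × ℕ × ℕ // p.2.2.1 ∈ X.hom p.1 p.2.1 ∧
          p.2.2.2 ∈ Z.hom ((f ≫ g).f0 p.1) ((f ≫ g).f0 p.2.1)} => x.val.1)).comp
        (CompComputes.proj41 _ _ _ _))
      (CompComputes.pair
        ((f.tr0.precomp (fun x : {p : X.A × X.A × ℕ × ℕ // p.2.2.1 ∈ X.hom p.1 p.2.1 ∧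
          p.2.2.2 ∈ Z.hom ((f ≫ g).f0 p.1) ((f ≫ g).f0 p.2.1)} => x.val.2.1)).comp
          (CompComputes.proj42 _ _ _ _))
        (CompComputes.pair hτ (CompComputes.proj44 _ _ _ _)))
  have hσ' := (dg.cT1.precomp et).comp het
  refine FibData.effFib
    { L0 := fun x => df.L0 (ef x)
      L1 := fun x => df.L1 (ef x)
      hL0 := fun x => by
        show g.f0 (f.f0 (df.L0 (ef x))) = x.val.2.1
        rw [df.hL0 (ef x)]
        exact dg.hL0 (eg x)
      hL1 := fun x => by
        show (g.f1 (f.f0 x.val.1) (f.f0 (df.L0 (ef x)))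
          (f.f1 x.val.1 (df.L0 (ef x)) (df.L1 (ef x)))).val = x.val.2.2
        have h1 := g.f1_val_congr rfl (df.hL0 (ef x))
          (f.f1 x.val.1 (df.L0 (ef x)) (df.L1 (ef x))) (dg.L1 (eg x)) (df.hL1 (ef x))
        rw [h1]
        exact dg.hL1 (eg x)
      cL0 := (df.cL0.precomp ef).comp hef
      cL1 := (df.cL1.precomp ef).comp hef
      T1 := fun x => df.T1 (exf x)
      hT1 := fun x => by
        show (g.f1 (f.f0 x.val.1) (f.f0 x.val.2.1)
          (f.f1 x.val.1 x.val.2.1 (df.T1 (exf x)))).val = x.val.2.2.2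
        have h1 := g.f1_val_congr rfl rfl
          (f.f1 x.val.1 x.val.2.1 (df.T1 (exf x))) (dg.T1 (et x)) (df.hT1 (exf x))
        rw [h1]
        exact dg.hT1 (et x)
      cT1 := (df.cT1.precomp exf).comp
        (CompComputes.pair (CompComputes.proj41 _ _ _ _)
          (CompComputes.pair (CompComputes.proj42 _ _ _ _)
            (CompComputes.pair (CompComputes.proj43 _ _ _ _) hσ'))) }

end FibLemmas

section Terminal

/-- The terminal object of `EFF`. -/
def effT : EffObj where
  A := PUnit
  α _ := 0
  hom _ _ := {0}
  idc := (CompComputes.const _ 0).toFinds fun _ => rfl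
  invc := (CompComputes.const _ 0).toFinds fun _ => rfl
  compc := (CompComputes.const _ 0).toFinds fun _ => rfl

/-- The unique map to the terminal object. -/
def effT.fromObj (B : EffObj) : B ⟶ effT where
  f0 _ := PUnit.unit
  f1 _ _ _ := ⟨0, rfl⟩
  tr0 := CompComputes.const _ 0
  tr1 := CompComputes.const _ 0

theorem effT_terminal : IsTerminalObj effT := by
  intro Z
  refine ⟨effT.fromObj Z, fun g => ?_⟩
  refine EffHom.ext_val (fun b => rfl) (fun b b' ρ => ?_)
  exact (g.f1 b b' ρ).prop

theorem effT_fib {B : EffObj} (f : B ⟶ effT) : EffFib f := by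
  obtain ⟨i, hi⟩ := B.idCell
  refine FibData.effFib
    { L0 := fun x => x.val.1
      L1 := fun x => i x.val.1
      hL0 := fun x => rfl
      hL1 := fun x => by
        have h1 : (f.f1 x.val.1 x.val.1 (i x.val.1)).val ∈ ({0} : Set ℕ) :=
          (f.f1 x.val.1 x.val.1 (i x.val.1)).prop
        have h2 : x.val.2.2 ∈ ({0} : Set ℕ) := x.prop
        rw [Set.mem_singleton_iff] at h1 h2
        rw [h1, h2]
      cL0 := CompComputes.proj31 _ _ _
      cL1 := (hi.precomp (fun x : {p : B.A × effT.A × ℕ //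
          p.2.2 ∈ effT.hom (f.f0 p.1) p.2.1} => x.val.1)).comp
        (CompComputes.proj31 _ _ _)
      T1 := fun x => ⟨x.val.2.2.1, x.prop.1⟩
      hT1 := fun x => by
        have h1 : (f.f1 x.val.1 x.val.2.1 ⟨x.val.2.2.1, x.prop.1⟩).val ∈ ({0} : Set ℕ) :=
          (f.f1 x.val.1 x.val.2.1 ⟨x.val.2.2.1, x.prop.1⟩).prop
        have h2 : x.val.2.2.2 ∈ ({0} : Set ℕ) := x.prop.2
        rw [Set.mem_singleton_iff] at h1 h2
        rw [h1, h2]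
      cT1 := CompComputes.proj43 _ _ _ _ }

end Terminal

section PBComparison

universe v u

theorem isPB_comparison {C : Type u} [Category.{v} C] {P Q X Y Z : C}
    {p₁ : P ⟶ X} {p₂ : P ⟶ Y} {q₁ : Q ⟶ X} {q₂ : Q ⟶ Y} {f : X ⟶ Z} {g : Y ⟶ Z}
    (hP : IsPB p₁ p₂ f g) (hQ : IsPB q₁ q₂ f g) :
    ∃ h : P ⟶ Q, IsIso h ∧ h ≫ q₁ = p₁ ∧ h ≫ q₂ = p₂ := by
  obtain ⟨hPc, hPu⟩ := hP
  obtain ⟨hQc, hQu⟩ := hQ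
  obtain ⟨h, ⟨h1, h2⟩, -⟩ := hQu P p₁ p₂ hPc
  obtain ⟨k, ⟨k1, k2⟩, -⟩ := hPu Q q₁ q₂ hQc
  have hk : h ≫ k = 𝟙 P := by
    obtain ⟨m, -, hm⟩ := hPu P p₁ p₂ hPc
    have e1 := hm (h ≫ k) ⟨by simp [k1, h1], by simp [k2, h2]⟩
    have e2 := hm (𝟙 P) ⟨by simp, by simp⟩
    rw [e1, e2]
  have kh : k ≫ h = 𝟙 Q := by
    obtain ⟨m, -, hm⟩ := hQu Q q₁ q₂ hQc
    have e1 := hm (k ≫ h) ⟨by simp [h1, k1], by simp [h2, k2]⟩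
    have e2 := hm (𝟙 Q) ⟨by simp, by simp⟩
    rw [e1, e2]
  exact ⟨h, ⟨k, hk, kh⟩, h1, h2⟩

end PBComparison

section PairObj

/-- Pairs of cells between components. -/
def pairHom (X Y : EffObj) {T : Type} (u : T → X.A) (v : T → Y.A) (t t' : T) : Set ℕ :=
  {n | n.unpair.1 ∈ X.hom (u t) (u t') ∧ n.unpair.2 ∈ Y.hom (v t) (v t')}

theorem pairHom_mem {X Y : EffObj} {T : Type} {u : T → X.A} {v : T → Y.A} {t t' : T}
    {a b : ℕ} (ha : a ∈ X.hom (u t) (u t')) (hb : b ∈ Y.hom (v t) (v t')) :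
    Nat.pair a b ∈ pairHom X Y u v t t' := by
  refine ⟨?_, ?_⟩ <;> simp only [Nat.unpair_pair] <;> assumption

/-- An `EffObj` whose cells are (codings of) pairs of cells between components. -/
def pairObj (X Y : EffObj) (T : Type) (u : T → X.A) (v : T → Y.A) (αT : T → ℕ)
    (hu : CompComputes αT (fun t => X.α (u t)))
    (hv : CompComputes αT (fun t => Y.α (v t))) : EffObj where
  A := T
  α := αT
  hom t t' := pairHom X Y u v t t'
  idc := by
    obtain ⟨i, hi⟩ := X.idCell
    obtain ⟨j, hj⟩ := Y.idCell
    exact CompComputes.toFinds (o := fun t => Nat.pair (i (u t)).val (j (v t)).val)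
      (((hi.precomp u).comp hu).pair ((hj.precomp v).comp hv))
      (fun t => pairHom_mem (i (u t)).prop (j (v t)).prop)
  invc := by
    obtain ⟨cx', hcx'⟩ := X.invCell
      (I := fun x : {p : T × T × ℕ // p.2.2 ∈ pairHom X Y u v p.1 p.2.1} =>
        Nat.pair (αT x.val.1) (Nat.pair (αT x.val.2.1) x.val.2.2))
      (a := fun x => u x.val.1) (a' := fun x => u x.val.2.1)
      (fun x => ⟨x.val.2.2.unpair.1, x.prop.1⟩)
      ((hu.precomp (fun x : {p : T × T × ℕ // p.2.2 ∈ pairHom X Y u v p.1 p.2.1} => x.val.1)).comp (CompComputes.proj31 _ _ _))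
      ((hu.precomp (fun x : {p : T × T × ℕ // p.2.2 ∈ pairHom X Y u v p.1 p.2.1} => x.val.2.1)).comp (CompComputes.proj32 _ _ _))
      ((CompComputes.proj33 _ _ _).unpair1)
    obtain ⟨cy', hcy'⟩ := Y.invCell
      (I := fun x : {p : T × T × ℕ // p.2.2 ∈ pairHom X Y u v p.1 p.2.1} =>
        Nat.pair (αT x.val.1) (Nat.pair (αT x.val.2.1) x.val.2.2))
      (a := fun x => v x.val.1) (a' := fun x => v x.val.2.1)
      (fun x => ⟨x.val.2.2.unpair.2, x.prop.2⟩)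
      ((hv.precomp (fun x : {p : T × T × ℕ // p.2.2 ∈ pairHom X Y u v p.1 p.2.1} => x.val.1)).comp (CompComputes.proj31 _ _ _))
      ((hv.precomp (fun x : {p : T × T × ℕ // p.2.2 ∈ pairHom X Y u v p.1 p.2.1} => x.val.2.1)).comp (CompComputes.proj32 _ _ _))
      ((CompComputes.proj33 _ _ _).unpair2)
    exact CompComputes.toFinds (o := fun x => Nat.pair (cx' x).val (cy' x).val)
      (hcx'.pair hcy') (fun x => pairHom_mem (cx' x).prop (cy' x).prop)
  compc := by
    obtain ⟨rx, hrx⟩ := X.compCell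
      (I := fun x : {p : T × T × T × ℕ × ℕ //
          p.2.2.2.1 ∈ pairHom X Y u v p.1 p.2.1 ∧
          p.2.2.2.2 ∈ pairHom X Y u v p.2.1 p.2.2.1} =>
        Nat.pair (αT x.val.1) (Nat.pair (αT x.val.2.1) (Nat.pair (αT x.val.2.2.1)
          (Nat.pair x.val.2.2.2.1 x.val.2.2.2.2))))
      (a := fun x => u x.val.1) (b := fun x => u x.val.2.1) (c := fun x => u x.val.2.2.1)
      (fun x => ⟨x.val.2.2.2.1.unpair.1, x.prop.1.1⟩)
      (fun x => ⟨x.val.2.2.2.2.unpair.1, x.prop.2.1⟩)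
      ((hu.precomp (fun x : {p : T × T × T × ℕ × ℕ //
          p.2.2.2.1 ∈ pairHom X Y u v p.1 p.2.1 ∧
          p.2.2.2.2 ∈ pairHom X Y u v p.2.1 p.2.2.1} => x.val.1)).comp (CompComputes.proj51 _ _ _ _ _))
      ((hu.precomp (fun x : {p : T × T × T × ℕ × ℕ //
          p.2.2.2.1 ∈ pairHom X Y u v p.1 p.2.1 ∧
          p.2.2.2.2 ∈ pairHom X Y u v p.2.1 p.2.2.1} => x.val.2.1)).comp (CompComputes.proj52 _ _ _ _ _))
      ((hu.precomp (fun x : {p : T × T × T × ℕ × ℕ //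
          p.2.2.2.1 ∈ pairHom X Y u v p.1 p.2.1 ∧
          p.2.2.2.2 ∈ pairHom X Y u v p.2.1 p.2.2.1} => x.val.2.2.1)).comp (CompComputes.proj53 _ _ _ _ _))
      ((CompComputes.proj54 _ _ _ _ _).unpair1)
      ((CompComputes.proj55 _ _ _ _ _).unpair1)
    obtain ⟨ry, hry⟩ := Y.compCell
      (I := fun x : {p : T × T × T × ℕ × ℕ //
          p.2.2.2.1 ∈ pairHom X Y u v p.1 p.2.1 ∧
          p.2.2.2.2 ∈ pairHom X Y u v p.2.1 p.2.2.1} =>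
        Nat.pair (αT x.val.1) (Nat.pair (αT x.val.2.1) (Nat.pair (αT x.val.2.2.1)
          (Nat.pair x.val.2.2.2.1 x.val.2.2.2.2))))
      (a := fun x => v x.val.1) (b := fun x => v x.val.2.1) (c := fun x => v x.val.2.2.1)
      (fun x => ⟨x.val.2.2.2.1.unpair.2, x.prop.1.2⟩)
      (fun x => ⟨x.val.2.2.2.2.unpair.2, x.prop.2.2⟩)
      ((hv.precomp (fun x : {p : T × T × T × ℕ × ℕ //
          p.2.2.2.1 ∈ pairHom X Y u v p.1 p.2.1 ∧
          p.2.2.2.2 ∈ pairHom X Y u v p.2.1 p.2.2.1} => x.val.1)).comp (CompComputes.proj51 _ _ _ _ _))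
      ((hv.precomp (fun x : {p : T × T × T × ℕ × ℕ //
          p.2.2.2.1 ∈ pairHom X Y u v p.1 p.2.1 ∧
          p.2.2.2.2 ∈ pairHom X Y u v p.2.1 p.2.2.1} => x.val.2.1)).comp (CompComputes.proj52 _ _ _ _ _))
      ((hv.precomp (fun x : {p : T × T × T × ℕ × ℕ //
          p.2.2.2.1 ∈ pairHom X Y u v p.1 p.2.1 ∧
          p.2.2.2.2 ∈ pairHom X Y u v p.2.1 p.2.2.1} => x.val.2.2.1)).comp (CompComputes.proj53 _ _ _ _ _))
      ((CompComputes.proj54 _ _ _ _ _).unpair2)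
      ((CompComputes.proj55 _ _ _ _ _).unpair2)
    exact CompComputes.toFinds (o := fun x => Nat.pair (rx x).val (ry x).val)
      (hrx.pair hry) (fun x => pairHom_mem (rx x).prop (ry x).prop)

end PairObj

section Product

/-- The binary product in `EFF`. -/
def effProd (X Y : EffObj) : EffObj :=
  pairObj X Y (X.A × Y.A) Prod.fst Prod.snd
    (fun p => Nat.pair (X.α p.1) (Y.α p.2))
    (CompComputes.projL _ _) (CompComputes.projR _ _)

theorem prodHom_mem {X Y : EffObj} {t t' : (effProd X Y).A} {a b : ℕ}
    (ha : a ∈ X.hom t.1 t'.1) (hb : b ∈ Y.hom t.2 t'.2) :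
    Nat.pair a b ∈ (effProd X Y).hom t t' :=
  pairHom_mem (X := X) (Y := Y) (u := Prod.fst) (v := Prod.snd) ha hb

def effProd.p₁ (X Y : EffObj) : effProd X Y ⟶ X where
  f0 p := p.1
  f1 _ _ ρ := ⟨ρ.val.unpair.1, ρ.prop.1⟩
  tr0 := CompComputes.projL _ _
  tr1 := (CompComputes.proj33 _ _ _).unpair1

def effProd.p₂ (X Y : EffObj) : effProd X Y ⟶ Y where
  f0 p := p.2
  f1 _ _ ρ := ⟨ρ.val.unpair.2, ρ.prop.2⟩
  tr0 := CompComputes.projR _ _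
  tr1 := (CompComputes.proj33 _ _ _).unpair2

def effProd.lift {Q X Y : EffObj} (q₁ : Q ⟶ X) (q₂ : Q ⟶ Y) : Q ⟶ effProd X Y where
  f0 c := (q₁.f0 c, q₂.f0 c)
  f1 c c' ρ := ⟨Nat.pair (q₁.f1 c c' ρ).val (q₂.f1 c c' ρ).val,
    prodHom_mem (q₁.f1 c c' ρ).prop (q₂.f1 c c' ρ).prop⟩
  tr0 := q₁.tr0.pair q₂.tr0
  tr1 := q₁.tr1.pair q₂.tr1

theorem effProd_isBinProd (X Y : EffObj) :
    IsBinProd (effProd.p₁ X Y) (effProd.p₂ X Y) := by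
  intro Q q₁ q₂
  refine ⟨effProd.lift q₁ q₂, ⟨?_, ?_⟩, ?_⟩
  · refine EffHom.ext_val (fun c => rfl) (fun c c' ρ => ?_)
    show (Nat.pair (q₁.f1 c c' ρ).val (q₂.f1 c c' ρ).val).unpair.1 = (q₁.f1 c c' ρ).val
    rw [Nat.unpair_pair]
  · refine EffHom.ext_val (fun c => rfl) (fun c c' ρ => ?_)
    show (Nat.pair (q₁.f1 c c' ρ).val (q₂.f1 c c' ρ).val).unpair.2 = (q₂.f1 c c' ρ).val
    rw [Nat.unpair_pair]
  · rintro m ⟨hm₁, hm₂⟩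
    refine EffHom.ext_val (fun c => ?_) (fun c c' ρ => ?_)
    · exact Prod.ext (EffHom.congr_f0 hm₁ c) (EffHom.congr_f0 hm₂ c)
    · have h1 := EffHom.congr_f1 hm₁ c c' ρ
      have h2 := EffHom.congr_f1 hm₂ c c' ρ
      show (m.f1 c c' ρ).val = Nat.pair (q₁.f1 c c' ρ).val (q₂.f1 c c' ρ).val
      rw [← h1, ← h2]
      exact (Nat.pair_unpair _).symm

end Product

section PathObject

variable (X : EffObj)

/-- The path object on `X`: 0-cells are the 1-cells of `X`. -/
def effPathObj : EffObj :=
  pairObj X X {p : X.A × X.A × ℕ // p.2.2 ∈ X.hom p.1 p.2.1}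
    (fun t => t.val.1) (fun t => t.val.2.1)
    (fun t => Nat.pair (X.α t.val.1) (Nat.pair (X.α t.val.2.1) t.val.2.2))
    (CompComputes.proj31 _ _ _) (CompComputes.proj32 _ _ _)

theorem pathHom_mem {X : EffObj} {t t' : (effPathObj X).A} {a b : ℕ}
    (ha : a ∈ X.hom t.val.1 t'.val.1) (hb : b ∈ X.hom t.val.2.1 t'.val.2.1) :
    Nat.pair a b ∈ (effPathObj X).hom t t' :=
  pairHom_mem (X := X) (Y := X)
    (u := fun t : {p : X.A × X.A × ℕ // p.2.2 ∈ X.hom p.1 p.2.1} => t.val.1)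
    (v := fun t => t.val.2.1) ha hb

def effPath.s : effPathObj X ⟶ X where
  f0 t := t.val.1
  f1 _ _ c := ⟨c.val.unpair.1, c.prop.1⟩
  tr0 := CompComputes.proj31 _ _ _
  tr1 := (CompComputes.proj33 _ _ _).unpair1

def effPath.t : effPathObj X ⟶ X where
  f0 t := t.val.2.1
  f1 _ _ c := ⟨c.val.unpair.2, c.prop.2⟩
  tr0 := CompComputes.proj32 _ _ _
  tr1 := (CompComputes.proj33 _ _ _).unpair2

def effPath.r (i : ∀ a : X.A, X.Cell a a)
    (hi : CompComputes (fun a : X.A => X.α a) (fun a => (i a).val)) :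
    X ⟶ effPathObj X where
  f0 a := ⟨(a, a, (i a).val), (i a).prop⟩
  f1 a a' ρ := ⟨Nat.pair ρ.val ρ.val, pathHom_mem ρ.prop ρ.prop⟩
  tr0 := (CompComputes.id _).pair ((CompComputes.id _).pair hi)
  tr1 := (CompComputes.proj33 _ _ _).pair (CompComputes.proj33 _ _ _)

def effPath.h : effPathObj X ⟶ effProd X X where
  f0 t := (t.val.1, t.val.2.1)
  f1 _ _ c := ⟨c.val, ⟨c.prop.1, c.prop.2⟩⟩
  tr0 := (CompComputes.proj31 _ _ _).pair (CompComputes.proj32 _ _ _)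
  tr1 := CompComputes.proj33 _ _ _

variable {X}

theorem effPath_rs (i : ∀ a : X.A, X.Cell a a)
    (hi : CompComputes (fun a : X.A => X.α a) (fun a => (i a).val)) :
    effPath.r X i hi ≫ effPath.s X = 𝟙 X := by
  refine EffHom.ext_val (fun a => rfl) (fun a a' ρ => ?_)
  show (Nat.pair ρ.val ρ.val).unpair.1 = ρ.val
  rw [Nat.unpair_pair]

theorem effPath_rt (i : ∀ a : X.A, X.Cell a a)
    (hi : CompComputes (fun a : X.A => X.α a) (fun a => (i a).val)) :
    effPath.r X i hi ≫ effPath.t X = 𝟙 X := by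
  refine EffHom.ext_val (fun a => rfl) (fun a a' ρ => ?_)
  show (Nat.pair ρ.val ρ.val).unpair.2 = ρ.val
  rw [Nat.unpair_pair]

theorem effPath_r_eqv (i : ∀ a : X.A, X.Cell a a)
    (hi : CompComputes (fun a : X.A => X.α a) (fun a => (i a).val)) :
    EffEqv (effPath.r X i hi) := by
  refine ⟨effPath.s X, EffHomotopic.of_eq (effPath_rs i hi), ?_⟩
  refine effHomotopic_iff.mpr ⟨fun p => ⟨Nat.pair (i p.val.1).val p.val.2.2,
    pathHom_mem (i p.val.1).prop p.prop⟩, ?_⟩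
  exact CompComputes.pair
    ((hi.precomp (fun p : (effPathObj X).A => p.val.1)).comp (CompComputes.proj31 _ _ _))
    (CompComputes.proj33 _ _ _)

theorem effPath_h_p₁ : effPath.h X ≫ effProd.p₁ X X = effPath.s X :=
  EffHom.ext_val (fun t => rfl) (fun t t' c => rfl)

theorem effPath_h_p₂ : effPath.h X ≫ effProd.p₂ X X = effPath.t X :=
  EffHom.ext_val (fun t => rfl) (fun t t' c => rfl)

theorem effPath_h_fib : EffFib (effPath.h X) := by
  -- lifting: given a path (a, a', π) in `PX`, a pair of 0-cells (b, b') in the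
  -- product and a pair of cells (σ₁ : a → b, σ₂ : a' → b'), lift to the path
  -- (b, b', σ₂ ∘ π ∘ σ₁⁻¹).
  let PLIdx : Type := {p : (effPathObj X).A × (effProd X X).A × ℕ //
    p.2.2 ∈ (effProd X X).hom ((effPath.h X).f0 p.1) p.2.1}
  let PLIn : PLIdx → ℕ := fun x =>
    Nat.pair ((effPathObj X).α x.val.1)
      (Nat.pair ((effProd X X).α x.val.2.1) x.val.2.2)
  have hPX : CompComputes PLIn (fun x : PLIdx => Nat.pair (X.α x.val.1.val.1)
      (Nat.pair (X.α x.val.1.val.2.1) x.val.1.val.2.2)) :=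
    CompComputes.proj31 _ _ _
  have hW : CompComputes PLIn
      (fun x : PLIdx => Nat.pair (X.α x.val.2.1.1) (X.α x.val.2.1.2)) :=
    CompComputes.proj32 _ _ _
  have ha : CompComputes PLIn (fun x : PLIdx => X.α x.val.1.val.1) :=
    (CompComputes.proj31 (fun x : PLIdx => X.α x.val.1.val.1)
      (fun x => X.α x.val.1.val.2.1) (fun x => x.val.1.val.2.2)).comp hPX
  have ha' : CompComputes PLIn (fun x : PLIdx => X.α x.val.1.val.2.1) :=
    (CompComputes.proj32 (fun x : PLIdx => X.α x.val.1.val.1)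
      (fun x => X.α x.val.1.val.2.1) (fun x => x.val.1.val.2.2)).comp hPX
  have hπ : CompComputes PLIn (fun x : PLIdx => x.val.1.val.2.2) :=
    (CompComputes.proj33 (fun x : PLIdx => X.α x.val.1.val.1)
      (fun x => X.α x.val.1.val.2.1) (fun x => x.val.1.val.2.2)).comp hPX
  have hb : CompComputes PLIn (fun x : PLIdx => X.α x.val.2.1.1) :=
    (CompComputes.projL (fun x : PLIdx => X.α x.val.2.1.1)
      (fun x => X.α x.val.2.1.2)).comp hW
  have hb' : CompComputes PLIn (fun x : PLIdx => X.α x.val.2.1.2) :=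
    (CompComputes.projR (fun x : PLIdx => X.α x.val.2.1.1)
      (fun x => X.α x.val.2.1.2)).comp hW
  have hn : CompComputes PLIn (fun x : PLIdx => x.val.2.2) :=
    CompComputes.proj33 _ _ _
  -- σ₁⁻¹ : b → a
  obtain ⟨inv1, hinv1⟩ := X.invCell (I := PLIn)
    (a := fun x : PLIdx => x.val.1.val.1) (a' := fun x : PLIdx => x.val.2.1.1)
    (fun x => ⟨x.val.2.2.unpair.1, x.prop.1⟩) ha hb hn.unpair1
  -- (σ₁⁻¹ ; π) : b → a'
  obtain ⟨c1, hc1⟩ := X.compCell (I := PLIn)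
    (a := fun x : PLIdx => x.val.2.1.1) (b := fun x : PLIdx => x.val.1.val.1)
    (c := fun x : PLIdx => x.val.1.val.2.1)
    inv1 (fun x => ⟨x.val.1.val.2.2, x.val.1.prop⟩) hb ha ha' hinv1 hπ
  -- ((σ₁⁻¹ ; π) ; σ₂) : b → b'
  obtain ⟨c2, hc2⟩ := X.compCell (I := PLIn)
    (a := fun x : PLIdx => x.val.2.1.1) (b := fun x : PLIdx => x.val.1.val.2.1)
    (c := fun x : PLIdx => x.val.2.1.2)
    c1 (fun x => ⟨x.val.2.2.unpair.2, x.prop.2⟩) hb ha' hb' hc1 hn.unpair2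
  refine FibData.effFib
    { L0 := fun x : PLIdx => ⟨(x.val.2.1.1, x.val.2.1.2, (c2 x).val), (c2 x).prop⟩
      L1 := fun x => ⟨x.val.2.2, ⟨x.prop.1, x.prop.2⟩⟩
      hL0 := fun x => rfl
      hL1 := fun x => rfl
      cL0 := CompComputes.pair hb (CompComputes.pair hb' hc2)
      cL1 := hn
      T1 := fun x => ⟨x.val.2.2.2, ⟨x.prop.2.1, x.prop.2.2⟩⟩
      hT1 := fun x => rfl
      cT1 := CompComputes.proj44 _ _ _ _ }

end PathObject

section Pullback

variable {X Y Z : EffObj} (f : X ⟶ Z) (g : Y ⟶ Z)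

/-- 0-cells of the pullback. -/
def pbA : Type := {p : X.A × Y.A // f.f0 p.1 = g.f0 p.2}

/-- 1-cells of the pullback: pairs of cells with equal images in `Z`. -/
def pbHom (p p' : pbA f g) : Set ℕ :=
  {n | ∃ (ρ : X.Cell p.val.1 p'.val.1) (σ : Y.Cell p.val.2 p'.val.2),
    n = Nat.pair ρ.val σ.val ∧
    (f.f1 p.val.1 p'.val.1 ρ).val = (g.f1 p.val.2 p'.val.2 σ).val}

def pbα (p : pbA f g) : ℕ := Nat.pair (X.α p.val.1) (Y.α p.val.2)

/-- The pullback of the fibration `f` along `g`. -/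
def effPB (d : FibData f) : EffObj where
  A := pbA f g
  α := pbα f g
  hom := pbHom f g
  idc := by
    obtain ⟨i, hi⟩ := X.idCell
    obtain ⟨j, hj⟩ := Y.idCell
    let πg : ∀ p : pbA f g, Z.Cell (g.f0 p.val.2) (g.f0 p.val.2) :=
      fun p => g.f1 p.val.2 p.val.2 (j p.val.2)
    let tIdx : pbA f g → {q : X.A × X.A × ℕ × ℕ //
        q.2.2.1 ∈ X.hom q.1 q.2.1 ∧ q.2.2.2 ∈ Z.hom (f.f0 q.1) (f.f0 q.2.1)} :=
      fun p => ⟨(p.val.1, p.val.1, (i p.val.1).val, (πg p).val),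
        ⟨(i p.val.1).prop, mem_hom_congr p.prop.symm p.prop.symm (πg p).prop⟩⟩
    have hx : CompComputes (pbα f g) (fun p : pbA f g => X.α p.val.1) :=
      CompComputes.projL _ _
    have hy : CompComputes (pbα f g) (fun p : pbA f g => Y.α p.val.2) :=
      CompComputes.projR _ _
    have hjy : CompComputes (pbα f g) (fun p : pbA f g => (j p.val.2).val) :=
      (hj.precomp (fun p : pbA f g => p.val.2)).comp hy
    have hπg : CompComputes (pbα f g) (fun p : pbA f g => (πg p).val) :=
      (g.tr1.precomp (fun p : pbA f g =>
        (⟨p.val.2, p.val.2, j p.val.2⟩ : (b : Y.A) × (b' : Y.A) × Y.Cell b b'))).comp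
        (hy.pair (hy.pair hjy))
    have hix : CompComputes (pbα f g) (fun p : pbA f g => (i p.val.1).val) :=
      (hi.precomp (fun p : pbA f g => p.val.1)).comp hx
    have hρ : CompComputes (pbα f g) (fun p : pbA f g => (d.T1 (tIdx p)).val) :=
      (d.cT1.precomp tIdx).comp (hx.pair (hx.pair (hix.pair hπg)))
    exact CompComputes.toFinds
      (o := fun p => Nat.pair (d.T1 (tIdx p)).val (j p.val.2).val)
      (hρ.pair hjy)
      (fun p => ⟨d.T1 (tIdx p), j p.val.2, rfl, d.hT1 (tIdx p)⟩)
  invc := by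
    obtain ⟨i, hi⟩ := X.idCell
    let IIdx : Type := {q : pbA f g × pbA f g × ℕ // q.2.2 ∈ pbHom f g q.1 q.2.1}
    let IIn : IIdx → ℕ := fun x =>
      Nat.pair (pbα f g x.val.1) (Nat.pair (pbα f g x.val.2.1) x.val.2.2)
    choose ρ₀ σ₀ he hcmp using fun x : IIdx => x.prop
    have hq : CompComputes IIn (fun x : IIdx => pbα f g x.val.1) :=
      CompComputes.proj31 _ _ _
    have hq' : CompComputes IIn (fun x : IIdx => pbα f g x.val.2.1) :=
      CompComputes.proj32 _ _ _
    have hn : CompComputes IIn (fun x : IIdx => x.val.2.2) :=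
      CompComputes.proj33 _ _ _
    have hx1 : CompComputes IIn (fun x : IIdx => X.α x.val.1.val.1) :=
      (CompComputes.projL (fun x : IIdx => X.α x.val.1.val.1)
        (fun x => Y.α x.val.1.val.2)).comp hq
    have hy1 : CompComputes IIn (fun x : IIdx => Y.α x.val.1.val.2) :=
      (CompComputes.projR (fun x : IIdx => X.α x.val.1.val.1)
        (fun x => Y.α x.val.1.val.2)).comp hq
    have hx1' : CompComputes IIn (fun x : IIdx => X.α x.val.2.1.val.1) :=
      (CompComputes.projL (fun x : IIdx => X.α x.val.2.1.val.1)
        (fun x => Y.α x.val.2.1.val.2)).comp hq'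
    have hy1' : CompComputes IIn (fun x : IIdx => Y.α x.val.2.1.val.2) :=
      (CompComputes.projR (fun x : IIdx => X.α x.val.2.1.val.1)
        (fun x => Y.α x.val.2.1.val.2)).comp hq'
    have hρ₀ : CompComputes IIn (fun x : IIdx => (ρ₀ x).val) :=
      hn.unpair1.ofEq (fun x => by rw [he x, Nat.unpair_pair])
    have hσ₀ : CompComputes IIn (fun x : IIdx => (σ₀ x).val) :=
      hn.unpair2.ofEq (fun x => by rw [he x, Nat.unpair_pair])
    obtain ⟨σ', hσ'⟩ := Y.invCell (I := IIn)
      (a := fun x : IIdx => x.val.1.val.2) (a' := fun x : IIdx => x.val.2.1.val.2)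
      σ₀ hy1 hy1' hσ₀
    obtain ⟨ρt, hρt⟩ := X.invCell (I := IIn)
      (a := fun x : IIdx => x.val.1.val.1) (a' := fun x : IIdx => x.val.2.1.val.1)
      ρ₀ hx1 hx1' hρ₀
    let πg : ∀ x : IIdx, Z.Cell (g.f0 x.val.2.1.val.2) (g.f0 x.val.1.val.2) :=
      fun x => g.f1 x.val.2.1.val.2 x.val.1.val.2 (σ' x)
    have hπg : CompComputes IIn (fun x : IIdx => (πg x).val) :=
      (g.tr1.precomp (fun x : IIdx =>
        (⟨x.val.2.1.val.2, x.val.1.val.2, σ' x⟩ :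
          (b : Y.A) × (b' : Y.A) × Y.Cell b b'))).comp
        (hy1'.pair (hy1.pair hσ'))
    let tIdx : IIdx → {q : X.A × X.A × ℕ × ℕ //
        q.2.2.1 ∈ X.hom q.1 q.2.1 ∧ q.2.2.2 ∈ Z.hom (f.f0 q.1) (f.f0 q.2.1)} :=
      fun x => ⟨(x.val.2.1.val.1, x.val.1.val.1, (ρt x).val, (πg x).val),
        ⟨(ρt x).prop,
          mem_hom_congr x.val.2.1.prop.symm x.val.1.prop.symm (πg x).prop⟩⟩
    have hρ' : CompComputes IIn (fun x : IIdx => (d.T1 (tIdx x)).val) :=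
      (d.cT1.precomp tIdx).comp (hx1'.pair (hx1.pair (hρt.pair hπg)))
    exact CompComputes.toFinds
      (o := fun x => Nat.pair (d.T1 (tIdx x)).val (σ' x).val)
      (hρ'.pair hσ')
      (fun x => ⟨d.T1 (tIdx x), σ' x, rfl, d.hT1 (tIdx x)⟩)
  compc := by
    let CIdx : Type := {q : pbA f g × pbA f g × pbA f g × ℕ × ℕ //
      q.2.2.2.1 ∈ pbHom f g q.1 q.2.1 ∧ q.2.2.2.2 ∈ pbHom f g q.2.1 q.2.2.1}
    let CIn : CIdx → ℕ := fun x =>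
      Nat.pair (pbα f g x.val.1) (Nat.pair (pbα f g x.val.2.1)
        (Nat.pair (pbα f g x.val.2.2.1) (Nat.pair x.val.2.2.2.1 x.val.2.2.2.2)))
    choose ρ₁ σ₁ he₁ hcmp₁ using fun x : CIdx => x.prop.1
    choose ρ₂ σ₂ he₂ hcmp₂ using fun x : CIdx => x.prop.2
    have hq : CompComputes CIn (fun x : CIdx => pbα f g x.val.1) :=
      CompComputes.proj51 _ _ _ _ _
    have hq' : CompComputes CIn (fun x : CIdx => pbα f g x.val.2.1) :=
      CompComputes.proj52 _ _ _ _ _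
    have hq'' : CompComputes CIn (fun x : CIdx => pbα f g x.val.2.2.1) :=
      CompComputes.proj53 _ _ _ _ _
    have hn₁ : CompComputes CIn (fun x : CIdx => x.val.2.2.2.1) :=
      CompComputes.proj54 _ _ _ _ _
    have hn₂ : CompComputes CIn (fun x : CIdx => x.val.2.2.2.2) :=
      CompComputes.proj55 _ _ _ _ _
    have hx1 : CompComputes CIn (fun x : CIdx => X.α x.val.1.val.1) :=
      (CompComputes.projL (fun x : CIdx => X.α x.val.1.val.1)
        (fun x => Y.α x.val.1.val.2)).comp hq
    have hy1 : CompComputes CIn (fun x : CIdx => Y.α x.val.1.val.2) :=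
      (CompComputes.projR (fun x : CIdx => X.α x.val.1.val.1)
        (fun x => Y.α x.val.1.val.2)).comp hq
    have hx2 : CompComputes CIn (fun x : CIdx => X.α x.val.2.1.val.1) :=
      (CompComputes.projL (fun x : CIdx => X.α x.val.2.1.val.1)
        (fun x => Y.α x.val.2.1.val.2)).comp hq'
    have hy2 : CompComputes CIn (fun x : CIdx => Y.α x.val.2.1.val.2) :=
      (CompComputes.projR (fun x : CIdx => X.α x.val.2.1.val.1)
        (fun x => Y.α x.val.2.1.val.2)).comp hq'
    have hx3 : CompComputes CIn (fun x : CIdx => X.α x.val.2.2.1.val.1) :=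
      (CompComputes.projL (fun x : CIdx => X.α x.val.2.2.1.val.1)
        (fun x => Y.α x.val.2.2.1.val.2)).comp hq''
    have hy3 : CompComputes CIn (fun x : CIdx => Y.α x.val.2.2.1.val.2) :=
      (CompComputes.projR (fun x : CIdx => X.α x.val.2.2.1.val.1)
        (fun x => Y.α x.val.2.2.1.val.2)).comp hq''
    have hρ₁ : CompComputes CIn (fun x : CIdx => (ρ₁ x).val) :=
      hn₁.unpair1.ofEq (fun x => by rw [he₁ x, Nat.unpair_pair])
    have hσ₁ : CompComputes CIn (fun x : CIdx => (σ₁ x).val) :=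
      hn₁.unpair2.ofEq (fun x => by rw [he₁ x, Nat.unpair_pair])
    have hρ₂ : CompComputes CIn (fun x : CIdx => (ρ₂ x).val) :=
      hn₂.unpair1.ofEq (fun x => by rw [he₂ x, Nat.unpair_pair])
    have hσ₂ : CompComputes CIn (fun x : CIdx => (σ₂ x).val) :=
      hn₂.unpair2.ofEq (fun x => by rw [he₂ x, Nat.unpair_pair])
    obtain ⟨σc, hσc⟩ := Y.compCell (I := CIn)
      (a := fun x : CIdx => x.val.1.val.2) (b := fun x : CIdx => x.val.2.1.val.2)
      (c := fun x : CIdx => x.val.2.2.1.val.2)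
      σ₁ σ₂ hy1 hy2 hy3 hσ₁ hσ₂
    obtain ⟨ρc, hρc⟩ := X.compCell (I := CIn)
      (a := fun x : CIdx => x.val.1.val.1) (b := fun x : CIdx => x.val.2.1.val.1)
      (c := fun x : CIdx => x.val.2.2.1.val.1)
      ρ₁ ρ₂ hx1 hx2 hx3 hρ₁ hρ₂
    let πg : ∀ x : CIdx, Z.Cell (g.f0 x.val.1.val.2) (g.f0 x.val.2.2.1.val.2) :=
      fun x => g.f1 x.val.1.val.2 x.val.2.2.1.val.2 (σc x)
    have hπg : CompComputes CIn (fun x : CIdx => (πg x).val) :=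
      (g.tr1.precomp (fun x : CIdx =>
        (⟨x.val.1.val.2, x.val.2.2.1.val.2, σc x⟩ :
          (b : Y.A) × (b' : Y.A) × Y.Cell b b'))).comp
        (hy1.pair (hy3.pair hσc))
    let tIdx : CIdx → {q : X.A × X.A × ℕ × ℕ //
        q.2.2.1 ∈ X.hom q.1 q.2.1 ∧ q.2.2.2 ∈ Z.hom (f.f0 q.1) (f.f0 q.2.1)} :=
      fun x => ⟨(x.val.1.val.1, x.val.2.2.1.val.1, (ρc x).val, (πg x).val),
        ⟨(ρc x).prop,
          mem_hom_congr x.val.1.prop.symm x.val.2.2.1.prop.symm (πg x).prop⟩⟩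
    have hρ' : CompComputes CIn (fun x : CIdx => (d.T1 (tIdx x)).val) :=
      (d.cT1.precomp tIdx).comp (hx1.pair (hx3.pair (hρc.pair hπg)))
    exact CompComputes.toFinds
      (o := fun x => Nat.pair (d.T1 (tIdx x)).val (σc x).val)
      (hρ'.pair hσc)
      (fun x => ⟨d.T1 (tIdx x), σc x, rfl, d.hT1 (tIdx x)⟩)

variable (d : FibData f)

def effPB.p₁ : effPB f g d ⟶ X where
  f0 p := p.val.1
  f1 p p' c := ⟨c.val.unpair.1, by
    obtain ⟨ρ, σ, he, -⟩ := c.prop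
    rw [he, Nat.unpair_pair]
    exact ρ.prop⟩
  tr0 := CompComputes.projL _ _
  tr1 := (CompComputes.proj33 _ _ _).unpair1

def effPB.p₂ : effPB f g d ⟶ Y where
  f0 p := p.val.2
  f1 p p' c := ⟨c.val.unpair.2, by
    obtain ⟨ρ, σ, he, -⟩ := c.prop
    rw [he, Nat.unpair_pair]
    exact σ.prop⟩
  tr0 := CompComputes.projR _ _
  tr1 := (CompComputes.proj33 _ _ _).unpair2

def effPB.lift {Q : EffObj} (q₁ : Q ⟶ X) (q₂ : Q ⟶ Y) (hq : q₁ ≫ f = q₂ ≫ g) :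
    Q ⟶ effPB f g d where
  f0 c := ⟨(q₁.f0 c, q₂.f0 c), EffHom.congr_f0 hq c⟩
  f1 c c' ρ := ⟨Nat.pair (q₁.f1 c c' ρ).val (q₂.f1 c c' ρ).val,
    ⟨q₁.f1 c c' ρ, q₂.f1 c c' ρ, rfl, EffHom.congr_f1 hq c c' ρ⟩⟩
  tr0 := q₁.tr0.pair q₂.tr0
  tr1 := q₁.tr1.pair q₂.tr1

theorem effPB_isPB : IsPB (effPB.p₁ f g d) (effPB.p₂ f g d) f g := by
  constructor
  · refine EffHom.ext_val (fun p => p.prop) (fun p p' c => ?_)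
    obtain ⟨ρ, σ, he, hcmp⟩ := c.prop
    have e1 : (f.f1 p.val.1 p'.val.1 ((effPB.p₁ f g d).f1 p p' c)).val =
        (f.f1 p.val.1 p'.val.1 ρ).val :=
      f.f1_val_congr rfl rfl _ ρ (by show c.val.unpair.1 = ρ.val; rw [he, Nat.unpair_pair])
    have e2 : (g.f1 p.val.2 p'.val.2 ((effPB.p₂ f g d).f1 p p' c)).val =
        (g.f1 p.val.2 p'.val.2 σ).val :=
      g.f1_val_congr rfl rfl _ σ (by show c.val.unpair.2 = σ.val; rw [he, Nat.unpair_pair])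
    show (f.f1 p.val.1 p'.val.1 ((effPB.p₁ f g d).f1 p p' c)).val =
      (g.f1 p.val.2 p'.val.2 ((effPB.p₂ f g d).f1 p p' c)).val
    rw [e1, e2]
    exact hcmp
  · intro Q q₁ q₂ hq
    refine ⟨effPB.lift f g d q₁ q₂ hq, ⟨?_, ?_⟩, ?_⟩
    · refine EffHom.ext_val (fun c => rfl) (fun c c' ρ => ?_)
      show (Nat.pair (q₁.f1 c c' ρ).val (q₂.f1 c c' ρ).val).unpair.1 = (q₁.f1 c c' ρ).val
      rw [Nat.unpair_pair]
    · refine EffHom.ext_val (fun c => rfl) (fun c c' ρ => ?_)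
      show (Nat.pair (q₁.f1 c c' ρ).val (q₂.f1 c c' ρ).val).unpair.2 = (q₂.f1 c c' ρ).val
      rw [Nat.unpair_pair]
    · rintro m ⟨hm₁, hm₂⟩
      refine EffHom.ext_val (fun c => ?_) (fun c c' ρ => ?_)
      · exact Subtype.ext (Prod.ext (EffHom.congr_f0 hm₁ c) (EffHom.congr_f0 hm₂ c))
      · have h1 := EffHom.congr_f1 hm₁ c c' ρ
        have h2 := EffHom.congr_f1 hm₂ c c' ρ
        show (m.f1 c c' ρ).val = Nat.pair (q₁.f1 c c' ρ).val (q₂.f1 c c' ρ).val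
        rw [← h1, ← h2]
        exact (Nat.pair_unpair _).symm

theorem effPB_p₂_fib : EffFib (effPB.p₂ f g d) := by
  -- lifting part
  let LIdx : Type := {q : (effPB f g d).A × Y.A × ℕ //
    q.2.2 ∈ Y.hom ((effPB.p₂ f g d).f0 q.1) q.2.1}
  let LIn : LIdx → ℕ := fun x =>
    Nat.pair ((effPB f g d).α x.val.1) (Nat.pair (Y.α x.val.2.1) x.val.2.2)
  let σL : ∀ x : LIdx, Y.Cell x.val.1.val.2 x.val.2.1 := fun x => ⟨x.val.2.2, x.prop⟩
  let πL : ∀ x : LIdx, Z.Cell (g.f0 x.val.1.val.2) (g.f0 x.val.2.1) :=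
    fun x => g.f1 x.val.1.val.2 x.val.2.1 (σL x)
  let lIdx : LIdx → {p : X.A × Z.A × ℕ // p.2.2 ∈ Z.hom (f.f0 p.1) p.2.1} :=
    fun x => ⟨(x.val.1.val.1, g.f0 x.val.2.1, (πL x).val),
      mem_hom_congr x.val.1.prop.symm rfl (πL x).prop⟩
  have hq : CompComputes LIn (fun x : LIdx => pbα f g x.val.1) :=
    CompComputes.proj31 _ _ _
  have hy' : CompComputes LIn (fun x : LIdx => Y.α x.val.2.1) :=
    CompComputes.proj32 _ _ _
  have hnn : CompComputes LIn (fun x : LIdx => x.val.2.2) :=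
    CompComputes.proj33 _ _ _
  have hx1 : CompComputes LIn (fun x : LIdx => X.α x.val.1.val.1) :=
    (CompComputes.projL (fun x : LIdx => X.α x.val.1.val.1)
      (fun x => Y.α x.val.1.val.2)).comp hq
  have hy1 : CompComputes LIn (fun x : LIdx => Y.α x.val.1.val.2) :=
    (CompComputes.projR (fun x : LIdx => X.α x.val.1.val.1)
      (fun x => Y.α x.val.1.val.2)).comp hq
  have hπL : CompComputes LIn (fun x : LIdx => (πL x).val) :=
    (g.tr1.precomp (fun x : LIdx =>
      (⟨x.val.1.val.2, x.val.2.1, σL x⟩ : (b : Y.A) × (b' : Y.A) × Y.Cell b b'))).comp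
      (hy1.pair (hy'.pair hnn))
  have hzy' : CompComputes LIn (fun x : LIdx => Z.α (g.f0 x.val.2.1)) :=
    (g.tr0.precomp (fun x : LIdx => x.val.2.1)).comp hy'
  have hlIn : CompComputes LIn (fun x : LIdx => Nat.pair (X.α x.val.1.val.1)
      (Nat.pair (Z.α (g.f0 x.val.2.1)) (πL x).val)) :=
    hx1.pair (hzy'.pair hπL)
  have hx' : CompComputes LIn (fun x : LIdx => X.α (d.L0 (lIdx x))) :=
    (d.cL0.precomp lIdx).comp hlIn
  have hρL : CompComputes LIn (fun x : LIdx => (d.L1 (lIdx x)).val) :=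
    (d.cL1.precomp lIdx).comp hlIn
  -- transport part
  let TIdx : Type := {q : (effPB f g d).A × (effPB f g d).A × ℕ × ℕ //
    q.2.2.1 ∈ (effPB f g d).hom q.1 q.2.1 ∧
    q.2.2.2 ∈ Y.hom ((effPB.p₂ f g d).f0 q.1) ((effPB.p₂ f g d).f0 q.2.1)}
  let TIn : TIdx → ℕ := fun x =>
    Nat.pair ((effPB f g d).α x.val.1) (Nat.pair ((effPB f g d).α x.val.2.1)
      (Nat.pair x.val.2.2.1 x.val.2.2.2))
  choose ρ₀ σ₀ he₀ hcmp₀ using fun x : TIdx => x.prop.1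
  let σT : ∀ x : TIdx, Y.Cell x.val.1.val.2 x.val.2.1.val.2 :=
    fun x => ⟨x.val.2.2.2, x.prop.2⟩
  let πT : ∀ x : TIdx, Z.Cell (g.f0 x.val.1.val.2) (g.f0 x.val.2.1.val.2) :=
    fun x => g.f1 x.val.1.val.2 x.val.2.1.val.2 (σT x)
  let tIdx : TIdx → {q : X.A × X.A × ℕ × ℕ //
      q.2.2.1 ∈ X.hom q.1 q.2.1 ∧ q.2.2.2 ∈ Z.hom (f.f0 q.1) (f.f0 q.2.1)} :=
    fun x => ⟨(x.val.1.val.1, x.val.2.1.val.1, (ρ₀ x).val, (πT x).val),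
      ⟨(ρ₀ x).prop,
        mem_hom_congr x.val.1.prop.symm x.val.2.1.prop.symm (πT x).prop⟩⟩
  have hp : CompComputes TIn (fun x : TIdx => pbα f g x.val.1) :=
    CompComputes.proj41 _ _ _ _
  have hp' : CompComputes TIn (fun x : TIdx => pbα f g x.val.2.1) :=
    CompComputes.proj42 _ _ _ _
  have hn1 : CompComputes TIn (fun x : TIdx => x.val.2.2.1) :=
    CompComputes.proj43 _ _ _ _
  have hn2 : CompComputes TIn (fun x : TIdx => x.val.2.2.2) :=
    CompComputes.proj44 _ _ _ _
  have tx1 : CompComputes TIn (fun x : TIdx => X.α x.val.1.val.1) :=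
    (CompComputes.projL (fun x : TIdx => X.α x.val.1.val.1)
      (fun x => Y.α x.val.1.val.2)).comp hp
  have ty1 : CompComputes TIn (fun x : TIdx => Y.α x.val.1.val.2) :=
    (CompComputes.projR (fun x : TIdx => X.α x.val.1.val.1)
      (fun x => Y.α x.val.1.val.2)).comp hp
  have tx2 : CompComputes TIn (fun x : TIdx => X.α x.val.2.1.val.1) :=
    (CompComputes.projL (fun x : TIdx => X.α x.val.2.1.val.1)
      (fun x => Y.α x.val.2.1.val.2)).comp hp'
  have ty2 : CompComputes TIn (fun x : TIdx => Y.α x.val.2.1.val.2) :=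
    (CompComputes.projR (fun x : TIdx => X.α x.val.2.1.val.1)
      (fun x => Y.α x.val.2.1.val.2)).comp hp'
  have hρ₀ : CompComputes TIn (fun x : TIdx => (ρ₀ x).val) :=
    hn1.unpair1.ofEq (fun x => by rw [he₀ x, Nat.unpair_pair])
  have hπT : CompComputes TIn (fun x : TIdx => (πT x).val) :=
    (g.tr1.precomp (fun x : TIdx =>
      (⟨x.val.1.val.2, x.val.2.1.val.2, σT x⟩ :
        (b : Y.A) × (b' : Y.A) × Y.Cell b b'))).comp
      (ty1.pair (ty2.pair hn2))
  have hρ' : CompComputes TIn (fun x : TIdx => (d.T1 (tIdx x)).val) :=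
    (d.cT1.precomp tIdx).comp (tx1.pair (tx2.pair (hρ₀.pair hπT)))
  refine FibData.effFib
    { L0 := fun x : LIdx => ⟨(d.L0 (lIdx x), x.val.2.1), d.hL0 (lIdx x)⟩
      L1 := fun x => ⟨Nat.pair (d.L1 (lIdx x)).val (σL x).val,
        ⟨d.L1 (lIdx x), σL x, rfl, d.hL1 (lIdx x)⟩⟩
      hL0 := fun x => rfl
      hL1 := fun x => by
        show (Nat.pair (d.L1 (lIdx x)).val (σL x).val).unpair.2 = x.val.2.2
        rw [Nat.unpair_pair]
      cL0 := hx'.pair hy'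
      cL1 := hρL.pair hnn
      T1 := fun x : TIdx => ⟨Nat.pair (d.T1 (tIdx x)).val (σT x).val,
        ⟨d.T1 (tIdx x), σT x, rfl, d.hT1 (tIdx x)⟩⟩
      hT1 := fun x => by
        show (Nat.pair (d.T1 (tIdx x)).val (σT x).val).unpair.2 = x.val.2.2.2
        rw [Nat.unpair_pair]
      cT1 := hρ'.pair hn2 }

end Pullback

section TrivialFib

variable {X Y Z : EffObj}

/-- A fibration admitting a one-sided homotopy inverse has a strict section. -/
theorem effFib_section (f : X ⟶ Y) (d : FibData f) (w : Y ⟶ X)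
    (hw : EffHomotopic (w ≫ f) (𝟙 Y)) : ∃ k : Y ⟶ X, k ≫ f = 𝟙 Y := by
  obtain ⟨c, hc⟩ := effHomotopic_iff.mp hw
  let lIdx : Y.A → {p : X.A × Y.A × ℕ // p.2.2 ∈ Y.hom (f.f0 p.1) p.2.1} :=
    fun y => ⟨(w.f0 y, y, (c y).val), (c y).prop⟩
  let k0 : Y.A → X.A := fun y => d.L0 (lIdx y)
  let ρk : ∀ y, X.Cell (w.f0 y) (k0 y) := fun y => d.L1 (lIdx y)
  have he : ∀ y, f.f0 (k0 y) = y := fun y => d.hL0 (lIdx y)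
  have hlIn : CompComputes (fun y : Y.A => Y.α y) (fun y => Nat.pair (X.α (w.f0 y))
      (Nat.pair (Y.α y) (c y).val)) :=
    w.tr0.pair ((CompComputes.id _).pair hc)
  have hk0 : CompComputes (fun y : Y.A => Y.α y) (fun y => X.α (k0 y)) :=
    (d.cL0.precomp lIdx).comp hlIn
  have hρk : CompComputes (fun y : Y.A => Y.α y) (fun y => (ρk y).val) :=
    (d.cL1.precomp lIdx).comp hlIn
  -- cells of the section
  let SIdx : Type := (y : Y.A) × (y' : Y.A) × Y.Cell y y'
  let SIn : SIdx → ℕ := fun x => Nat.pair (Y.α x.1) (Nat.pair (Y.α x.2.1) x.2.2.val)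
  have hy : CompComputes SIn (fun x : SIdx => Y.α x.1) := CompComputes.proj31 _ _ _
  have hy' : CompComputes SIn (fun x : SIdx => Y.α x.2.1) := CompComputes.proj32 _ _ _
  have hσ : CompComputes SIn (fun x : SIdx => x.2.2.val) := CompComputes.proj33 _ _ _
  have hk0y : CompComputes SIn (fun x : SIdx => X.α (k0 x.1)) :=
    (hk0.precomp (fun x : SIdx => x.1)).comp hy
  have hk0y' : CompComputes SIn (fun x : SIdx => X.α (k0 x.2.1)) :=
    (hk0.precomp (fun x : SIdx => x.2.1)).comp hy'
  have hwy : CompComputes SIn (fun x : SIdx => X.α (w.f0 x.1)) :=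
    ((w.tr0.precomp (fun x : SIdx => x.1))).comp hy
  have hwy' : CompComputes SIn (fun x : SIdx => X.α (w.f0 x.2.1)) :=
    ((w.tr0.precomp (fun x : SIdx => x.2.1))).comp hy'
  have hρky : CompComputes SIn (fun x : SIdx => (ρk x.1).val) :=
    (hρk.precomp (fun x : SIdx => x.1)).comp hy
  have hρky' : CompComputes SIn (fun x : SIdx => (ρk x.2.1).val) :=
    (hρk.precomp (fun x : SIdx => x.2.1)).comp hy'
  obtain ⟨ρinv, hρinv⟩ := X.invCell (I := SIn)
    (a := fun x : SIdx => w.f0 x.1) (a' := fun x : SIdx => k0 x.1)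
    (fun x => ρk x.1) hwy hk0y hρky
  have hwσ : CompComputes SIn (fun x : SIdx => (w.f1 x.1 x.2.1 x.2.2).val) := w.tr1
  obtain ⟨cm1, hcm1⟩ := X.compCell (I := SIn)
    (a := fun x : SIdx => k0 x.1) (b := fun x : SIdx => w.f0 x.1)
    (c := fun x : SIdx => w.f0 x.2.1)
    ρinv (fun x => w.f1 x.1 x.2.1 x.2.2) hk0y hwy hwy' hρinv hwσ
  obtain ⟨cm2, hcm2⟩ := X.compCell (I := SIn)
    (a := fun x : SIdx => k0 x.1) (b := fun x : SIdx => w.f0 x.2.1)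
    (c := fun x : SIdx => k0 x.2.1)
    cm1 (fun x => ρk x.2.1) hk0y hwy' hk0y' hcm1 hρky'
  let tIdx : SIdx → {p : X.A × X.A × ℕ × ℕ //
      p.2.2.1 ∈ X.hom p.1 p.2.1 ∧ p.2.2.2 ∈ Y.hom (f.f0 p.1) (f.f0 p.2.1)} :=
    fun x => ⟨(k0 x.1, k0 x.2.1, (cm2 x).val, x.2.2.val),
      ⟨(cm2 x).prop, mem_hom_congr (he x.1).symm (he x.2.1).symm x.2.2.prop⟩⟩
  have hk1 : CompComputes SIn (fun x : SIdx => (d.T1 (tIdx x)).val) :=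
    (d.cT1.precomp tIdx).comp (hk0y.pair (hk0y'.pair (hcm2.pair hσ)))
  refine ⟨{ f0 := k0
            f1 := fun y y' σ => d.T1 (tIdx ⟨y, y', σ⟩)
            tr0 := hk0
            tr1 := hk1 }, ?_⟩
  exact EffHom.ext_val (fun y => he y) (fun y y' σ => d.hT1 (tIdx ⟨y, y', σ⟩))

/-- The pullback of a trivial fibration is an equivalence. -/
theorem effPB_p₂_eqv (f : X ⟶ Z) (g : Y ⟶ Z) (d : FibData f)
    (w : Z ⟶ X) (hw1 : EffHomotopic (f ≫ w) (𝟙 X))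
    (hw2 : EffHomotopic (w ≫ f) (𝟙 Z)) : EffEqv (effPB.p₂ f g d) := by
  obtain ⟨k, hk⟩ := effFib_section f d w hw2
  have hq : (g ≫ k) ≫ f = 𝟙 Y ≫ g := by
    rw [Category.assoc, hk, Category.comp_id, Category.id_comp]
  refine ⟨effPB.lift f g d (g ≫ k) (𝟙 Y) hq, ?_, ?_⟩
  · -- p₂ ≫ lift ∼ 𝟙 P
    obtain ⟨j, hj⟩ := Y.idCell
    obtain ⟨cc, hcc⟩ := effHomotopic_iff.mp hw1
    let P : EffObj := effPB f g d
    let a : P.A → X.A := fun p => k.f0 (g.f0 p.val.2)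
    have ea : ∀ p : P.A, f.f0 (a p) = g.f0 p.val.2 :=
      fun p => EffHom.congr_f0 hk (g.f0 p.val.2)
    have hx : CompComputes (pbα f g) (fun p : P.A => X.α p.val.1) :=
      CompComputes.projL _ _
    have hy : CompComputes (pbα f g) (fun p : P.A => Y.α p.val.2) :=
      CompComputes.projR _ _
    have hga : CompComputes (pbα f g) (fun p : P.A => Z.α (g.f0 p.val.2)) :=
      (g.tr0.precomp (fun p : P.A => p.val.2)).comp hy
    have hka : CompComputes (pbα f g) (fun p : P.A => X.α (a p)) :=
      (k.tr0.precomp (fun p : P.A => g.f0 p.val.2)).comp hga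
    have hc₁ : CompComputes (pbα f g) (fun p : P.A => (cc (a p)).val) :=
      (hcc.precomp a).comp hka
    have hwa : CompComputes (pbα f g) (fun p : P.A => X.α (w.f0 (f.f0 (a p)))) :=
      (w.tr0.precomp (fun p : P.A => f.f0 (a p))).comp ((f.tr0.precomp a).comp hka)
    obtain ⟨inv₁, hinv₁⟩ := X.invCell (I := pbα f g)
      (a := fun p : P.A => w.f0 (f.f0 (a p))) (a' := a)
      (fun p => cc (a p)) hwa hka hc₁
    have em : ∀ p : P.A, f.f0 p.val.1 = f.f0 (a p) :=
      fun p => p.prop.trans (ea p).symm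
    let c₂ : ∀ p : P.A, X.Cell (w.f0 (f.f0 (a p))) p.val.1 :=
      fun p => ⟨(cc p.val.1).val,
        mem_hom_congr (congrArg w.f0 (em p)) rfl (cc p.val.1).prop⟩
    have hc₂ : CompComputes (pbα f g) (fun p : P.A => (c₂ p).val) :=
      (hcc.precomp (fun p : P.A => p.val.1)).comp hx
    obtain ⟨cm, hcm⟩ := X.compCell (I := pbα f g)
      (a := a) (b := fun p : P.A => w.f0 (f.f0 (a p))) (c := fun p : P.A => p.val.1)
      inv₁ c₂ hka hwa hx hinv₁ hc₂
    let πc : ∀ p : P.A, Z.Cell (g.f0 p.val.2) (g.f0 p.val.2) :=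
      fun p => g.f1 p.val.2 p.val.2 (j p.val.2)
    have hjy : CompComputes (pbα f g) (fun p : P.A => (j p.val.2).val) :=
      (hj.precomp (fun p : P.A => p.val.2)).comp hy
    have hπc : CompComputes (pbα f g) (fun p : P.A => (πc p).val) :=
      (g.tr1.precomp (fun p : P.A =>
        (⟨p.val.2, p.val.2, j p.val.2⟩ : (b : Y.A) × (b' : Y.A) × Y.Cell b b'))).comp
        (hy.pair (hy.pair hjy))
    let tIdx : P.A → {q : X.A × X.A × ℕ × ℕ //
        q.2.2.1 ∈ X.hom q.1 q.2.1 ∧ q.2.2.2 ∈ Z.hom (f.f0 q.1) (f.f0 q.2.1)} :=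
      fun p => ⟨(a p, p.val.1, (cm p).val, (πc p).val),
        ⟨(cm p).prop, mem_hom_congr (ea p).symm p.prop.symm (πc p).prop⟩⟩
    have hρX : CompComputes (pbα f g) (fun p : P.A => (d.T1 (tIdx p)).val) :=
      (d.cT1.precomp tIdx).comp (hka.pair (hx.pair (hcm.pair hπc)))
    exact effHomotopic_iff.mpr
      ⟨fun p => ⟨Nat.pair (d.T1 (tIdx p)).val (j p.val.2).val,
        ⟨d.T1 (tIdx p), j p.val.2, rfl, d.hT1 (tIdx p)⟩⟩, hρX.pair hjy⟩
  · -- lift ≫ p₂ = 𝟙 Y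
    refine EffHomotopic.of_eq (EffHom.ext_val (fun y => rfl) (fun y y' σ => ?_))
    show (Nat.pair ((g ≫ k).f1 y y' σ).val σ.val).unpair.2 = σ.val
    rw [Nat.unpair_pair]

end TrivialFib

end EffPaper
namespace EffPaper

/-- With the fibrations and equivalences as defined, `EFF` is a
path category: it satisfies all seven axioms of a path category. -/
theorem EFF_is_path_category : IsPathCategory EffPS := by
  refine ⟨?_, ?_, ?_, ?_, ?_, ?_, ?_, ?_, ?_⟩
  · -- isomorphisms are fibrations
    intro X Y f hf
    exact effFib_of_iso f hf
  · -- fibrations are closed under composition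
    intro X Y Z f g hf hg
    exact effFib_comp hf hg
  · -- terminal object
    exact ⟨effT, effT_terminal, fun X f => effT_fib f⟩
  · -- pullbacks of fibrations
    intro X Y Z f g hf
    obtain ⟨d⟩ := EffFib.fibData hf
    exact ⟨effPB f g d, effPB.p₁ f g d, effPB.p₂ f g d, effPB_isPB f g d,
      effPB_p₂_fib f g d⟩
  · -- isomorphisms are equivalences
    intro X Y f hf
    exact effEqv_of_iso f hf
  · -- 2-out-of-6
    intro X Y Z W f g h hfg hgh
    obtain ⟨u, hu1, hu2⟩ := hfg
    obtain ⟨v, hv1, hv2⟩ := hgh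
    have hu1' : EffHomotopic (f ≫ g ≫ u) (𝟙 X) := by simpa using hu1
    have hu2' : EffHomotopic (u ≫ f ≫ g) (𝟙 Z) := by simpa using hu2
    have hv1' : EffHomotopic (g ≫ h ≫ v) (𝟙 Y) := by simpa using hv1
    have hv2' : EffHomotopic (v ≫ g ≫ h) (𝟙 W) := by simpa using hv2
    have t1 : EffHomotopic (h ≫ v ≫ g) (u ≫ f ≫ g ≫ h ≫ v ≫ g) := by
      simpa using hu2'.symm.whisker_right (h ≫ v ≫ g)
    have t2 : EffHomotopic (u ≫ f ≫ g ≫ h ≫ v ≫ g) (u ≫ f ≫ g) := by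
      simpa using (hv1'.whisker_right g).whisker_left (u ≫ f)
    have hA : EffHomotopic (h ≫ v ≫ g) (𝟙 Z) := (t1.trans t2).trans hu2'
    have hgE : EffEqv g := ⟨h ≫ v, hv1', by simpa using hA⟩
    have hhE : EffEqv h := ⟨v ≫ g, hA, by simpa using hv2'⟩
    have hfE : EffEqv f := by
      refine ⟨g ≫ u, by simpa using hu1', ?_⟩
      have s1 : EffHomotopic (g ≫ u ≫ f) (g ≫ u ≫ f ≫ g ≫ h ≫ v) := by
        simpa using hv1'.symm.whisker_left (g ≫ u ≫ f)
      have s2 : EffHomotopic (g ≫ u ≫ f ≫ g ≫ h ≫ v) (g ≫ h ≫ v) := by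
        simpa using (hu2'.whisker_left g).whisker_right (h ≫ v)
      have s3 := (s1.trans s2).trans hv1'
      simpa using s3
    exact ⟨hfE, hgE, hhE, EffEqv.comp hfE (EffEqv.comp hgE hhE)⟩
  · -- path objects
    intro X
    obtain ⟨i, hi⟩ := X.idCell
    exact ⟨effPathObj X, effPath.r X i hi, effPath.s X, effPath.t X,
      effPath_r_eqv i hi, effPath_rs i hi, effPath_rt i hi,
      effProd X X, effProd.p₁ X X, effProd.p₂ X X, effPath.h X,
      effProd_isBinProd X X, effPath_h_p₁, effPath_h_p₂, effPath_h_fib⟩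
  · -- trivial fibrations are stable under pullback
    intro X Y Z P f g p₁ p₂ hf hfe hPB
    obtain ⟨d⟩ := EffFib.fibData hf
    obtain ⟨w, hw1, hw2⟩ := hfe
    obtain ⟨h, hiso, h1, h2⟩ := isPB_comparison hPB (effPB_isPB f g d)
    constructor
    · show EffFib p₂
      rw [← h2]
      exact effFib_comp (effFib_of_iso h hiso) (effPB_p₂_fib f g d)
    · show EffEqv p₂
      rw [← h2]
      exact EffEqv.comp (effEqv_of_iso h hiso) (effPB_p₂_eqv f g d w hw1 hw2)
  · -- trivial fibrations have sections
    intro X Y f hf hfe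
    obtain ⟨d⟩ := EffFib.fibData hf
    obtain ⟨w, hw1, hw2⟩ := hfe
    exact effFib_section f d w hw2

end EffPaper
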